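/- One-shot multiple description achievability (Zhang–Berger form): Let q_S be a source pmf on a finite set 𝒮, let d_k : 𝒮 × Ŝ_k → [0,∞) for k = 0,1,2 be distortion measures with levels D₀, D₁, D₂ ≥ 0. For any conditional pmf q_{U₀U₁U₂|S} to finite sets, any reconstruction functions ŝ₀ : 𝒰₀×𝒰₁×𝒰₂ → Ŝ₀, ŝ₁ : 𝒰₀×𝒰₁ → Ŝ₁, ŝ₂ : 𝒰₀×𝒰₂ → Ŝ₂, positive integers M₁, M₂, and any positive integer J₀ that divides both M₁ and M₂, define q(s,u₀,u₁,u₂) = q(s)·q(u₀,u₁,u₂|s). Then there exists an (M₁,M₂)-code whose probability of no-excess distortion satisfies P[ d₀(S,Ŝ₀) ≤ D₀, d₁(S,Ŝ₁) ≤ D₁, d₂(S,Ŝ₂) ≤ D₂ ] ≥ E_q [ 1{ d₀(S, ŝ₀(U₀,U₁,U₂)) ≤ D₀, d₁(S, ŝ₁(U₀,U₁)) ≤ D₁, d₂(S, ŝ₂(U₀,U₂)) ≤ D₂ } / ( 1 + J₀^{−1}·2^{i_q(S;U₀)} + M₁^{−1}·2^{i_q(S;U₀U₁)} + M₂^{−1}·2^{i_q(S;U₀U₂)}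 + J₀(M₁M₂)^{−1}·2^{i_q(S;U₀U₁U₂) + i_q(U₁;U₂|U₀)} ) ]. -/

import Mathlib

open scoped BigOperators

/-- A pmf on a finite type, represented by a nonnegative real-valued function summing to 1. -/
structure FinPMF (α : Type) [Fintype α] where
  p : α → ℝ
  nonneg : ∀ a, 0 ≤ p a
  sum_eq_one : ∑ a, p a = 1

open Classical in
/-- Indicator of a proposition, as a real number. -/
noncomputable def ind (P : Prop) : ℝ := if P then 1 else 0

variable {S U0 U1 U2 R0 R1 R2 : Type}
  [Fintype S] [Fintype U0] [Fintype U1] [Fintype U2]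
  [Fintype R0] [Fintype R1] [Fintype R2]

/-- The joint pmf `q(s,u₀,u₁,u₂) = q(s) q(u₀,u₁,u₂|s)`. -/
noncomputable def qMD (qS : FinPMF S) (qU : S → FinPMF (U0 × U1 × U2))
    (s : S) (u0 : U0) (u1 : U1) (u2 : U2) : ℝ :=
  qS.p s * (qU s).p (u0, u1, u2)

noncomputable def mSU0 (qS : FinPMF S) (qU : S → FinPMF (U0 × U1 × U2))
    (s : S) (u0 : U0) : ℝ :=
  ∑ u1 : U1, ∑ u2 : U2, qMD qS qU s u0 u1 u2

noncomputable def mU0 (qS : FinPMF S) (qU : S → FinPMF (U0 × U1 × U2)) (u0 : U0) : ℝ :=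
  ∑ s : S, mSU0 qS qU s u0

noncomputable def mSU01 (qS : FinPMF S) (qU : S → FinPMF (U0 × U1 × U2))
    (s : S) (u0 : U0) (u1 : U1) : ℝ :=
  ∑ u2 : U2, qMD qS qU s u0 u1 u2

noncomputable def mU01 (qS : FinPMF S) (qU : S → FinPMF (U0 × U1 × U2))
    (u0 : U0) (u1 : U1) : ℝ :=
  ∑ s : S, mSU01 qS qU s u0 u1

noncomputable def mSU02 (qS : FinPMF S) (qU : S → FinPMF (U0 × U1 × U2))
    (s : S) (u0 : U0) (u2 : U2) : ℝ :=
  ∑ u1 : U1, qMD qS qU s u0 u1 u2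

noncomputable def mU02 (qS : FinPMF S) (qU : S → FinPMF (U0 × U1 × U2))
    (u0 : U0) (u2 : U2) : ℝ :=
  ∑ s : S, mSU02 qS qU s u0 u2

noncomputable def mU012 (qS : FinPMF S) (qU : S → FinPMF (U0 × U1 × U2))
    (u0 : U0) (u1 : U1) (u2 : U2) : ℝ :=
  ∑ s : S, qMD qS qU s u0 u1 u2

/-- Information density `i_q(S;U₀)`. -/
noncomputable def iSU0 (qS : FinPMF S) (qU : S → FinPMF (U0 × U1 × U2))
    (s : S) (u0 : U0) : ℝ :=
  Real.logb 2 (mSU0 qS qU s u0 / (qS.p s * mU0 qS qU u0))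

/-- Information density `i_q(S;U₀U₁)`, treating `(U₀,U₁)` as a single variable. -/
noncomputable def iSU01 (qS : FinPMF S) (qU : S → FinPMF (U0 × U1 × U2))
    (s : S) (u0 : U0) (u1 : U1) : ℝ :=
  Real.logb 2 (mSU01 qS qU s u0 u1 / (qS.p s * mU01 qS qU u0 u1))

/-- Information density `i_q(S;U₀U₂)`, treating `(U₀,U₂)` as a single variable. -/
noncomputable def iSU02 (qS : FinPMF S) (qU : S → FinPMF (U0 × U1 × U2))
    (s : S) (u0 : U0) (u2 : U2) : ℝ :=
  Real.logb 2 (mSU02 qS qU s u0 u2 / (qS.p s * mU02 qS qU u0 u2))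

/-- Information density `i_q(S;U₀U₁U₂)`, treating `(U₀,U₁,U₂)` as a single variable. -/
noncomputable def iSU012 (qS : FinPMF S) (qU : S → FinPMF (U0 × U1 × U2))
    (s : S) (u0 : U0) (u1 : U1) (u2 : U2) : ℝ :=
  Real.logb 2 (qMD qS qU s u0 u1 u2 / (qS.p s * mU012 qS qU u0 u1 u2))

/-- Conditional information density `i_q(U₁;U₂|U₀)`. -/
noncomputable def iU1U2cU0 (qS : FinPMF S) (qU : S → FinPMF (U0 × U1 × U2))
    (u0 : U0) (u1 : U1) (u2 : U2) : ℝ :=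
  Real.logb 2 (mU012 qS qU u0 u1 u2 * mU0 qS qU u0 /
    (mU01 qS qU u0 u1 * mU02 qS qU u0 u2))

/-- Probability of no-excess distortion of an `(M₁,M₂)`-code for multiple description
coding: `(M₁,M₂) = φ(S)`, `Ŝ₀ = ψ₀(M₁,M₂)`, `Ŝ₁ = ψ₁(M₁)`, `Ŝ₂ = ψ₂(M₂)`. -/
noncomputable def pNoExcessMD (M1 M2 : ℕ) (qS : FinPMF S)
    (d0 : S → R0 → ℝ) (d1 : S → R1 → ℝ) (d2 : S → R2 → ℝ) (D0 D1 D2 : ℝ)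
    (enc : S → FinPMF (Fin M1 × Fin M2)) (dec0 : Fin M1 × Fin M2 → FinPMF R0)
    (dec1 : Fin M1 → FinPMF R1) (dec2 : Fin M2 → FinPMF R2) : ℝ :=
  ∑ s : S, ∑ m : Fin M1 × Fin M2, ∑ r0 : R0, ∑ r1 : R1, ∑ r2 : R2,
    qS.p s * (enc s).p m * (dec0 m).p r0 * (dec1 m.1).p r1 * (dec2 m.2).p r2 *
      ind (d0 s r0 ≤ D0 ∧ d1 s r1 ≤ D1 ∧ d2 s r2 ≤ D2)


section MDHelpers
open Classical Finset

lemma ind_nonneg (P : Prop) : 0 ≤ ind P := by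
  unfold ind; split <;> norm_num

variable (qS : FinPMF S) (qU : S → FinPMF (U0 × U1 × U2))

lemma qMD_nonneg (s : S) (u0 : U0) (u1 : U1) (u2 : U2) : 0 ≤ qMD qS qU s u0 u1 u2 :=
  mul_nonneg (qS.nonneg s) ((qU s).nonneg _)

lemma mSU01_nonneg (s : S) (u0 : U0) (u1 : U1) : 0 ≤ mSU01 qS qU s u0 u1 :=
  Finset.sum_nonneg fun _ _ => qMD_nonneg qS qU _ _ _ _

lemma mSU02_nonneg (s : S) (u0 : U0) (u2 : U2) : 0 ≤ mSU02 qS qU s u0 u2 :=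
  Finset.sum_nonneg fun _ _ => qMD_nonneg qS qU _ _ _ _

lemma mSU0_nonneg (s : S) (u0 : U0) : 0 ≤ mSU0 qS qU s u0 :=
  Finset.sum_nonneg fun _ _ => mSU01_nonneg qS qU _ _ _

lemma mU0_nonneg (u0 : U0) : 0 ≤ mU0 qS qU u0 :=
  Finset.sum_nonneg fun _ _ => mSU0_nonneg qS qU _ _

lemma mU01_nonneg (u0 : U0) (u1 : U1) : 0 ≤ mU01 qS qU u0 u1 :=
  Finset.sum_nonneg fun _ _ => mSU01_nonneg qS qU _ _ _

lemma mU02_nonneg (u0 : U0) (u2 : U2) : 0 ≤ mU02 qS qU u0 u2 :=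
  Finset.sum_nonneg fun _ _ => mSU02_nonneg qS qU _ _ _

lemma mU012_nonneg (u0 : U0) (u1 : U1) (u2 : U2) : 0 ≤ mU012 qS qU u0 u1 u2 :=
  Finset.sum_nonneg fun _ _ => qMD_nonneg qS qU _ _ _ _

lemma qMD_le_mSU01 (s : S) (u0 : U0) (u1 : U1) (u2 : U2) :
    qMD qS qU s u0 u1 u2 ≤ mSU01 qS qU s u0 u1 :=
  Finset.single_le_sum (fun i _ => qMD_nonneg qS qU s u0 u1 i) (Finset.mem_univ u2)

lemma qMD_le_mSU02 (s : S) (u0 : U0) (u1 : U1) (u2 : U2) :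
    qMD qS qU s u0 u1 u2 ≤ mSU02 qS qU s u0 u2 :=
  Finset.single_le_sum (fun i _ => qMD_nonneg qS qU s u0 i u2) (Finset.mem_univ u1)

lemma qMD_le_mU012 (s : S) (u0 : U0) (u1 : U1) (u2 : U2) :
    qMD qS qU s u0 u1 u2 ≤ mU012 qS qU u0 u1 u2 :=
  Finset.single_le_sum (fun i _ => qMD_nonneg qS qU i u0 u1 u2) (Finset.mem_univ s)

lemma mSU01_le_mU01 (s : S) (u0 : U0) (u1 : U1) :
    mSU01 qS qU s u0 u1 ≤ mU01 qS qU u0 u1 :=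
  Finset.single_le_sum (fun i _ => mSU01_nonneg qS qU i u0 u1) (Finset.mem_univ s)

lemma mSU02_le_mU02 (s : S) (u0 : U0) (u2 : U2) :
    mSU02 qS qU s u0 u2 ≤ mU02 qS qU u0 u2 :=
  Finset.single_le_sum (fun i _ => mSU02_nonneg qS qU i u0 u2) (Finset.mem_univ s)

lemma mSU0_le_mU0 (s : S) (u0 : U0) : mSU0 qS qU s u0 ≤ mU0 qS qU u0 :=
  Finset.single_le_sum (fun i _ => mSU0_nonneg qS qU i u0) (Finset.mem_univ s)

lemma mSU01_le_mSU0 (s : S) (u0 : U0) (u1 : U1) :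
    mSU01 qS qU s u0 u1 ≤ mSU0 qS qU s u0 :=
  Finset.single_le_sum (fun i _ => mSU01_nonneg qS qU s u0 i) (Finset.mem_univ u1)

lemma mSU02_le_mSU0 (s : S) (u0 : U0) (u2 : U2) :
    mSU02 qS qU s u0 u2 ≤ mSU0 qS qU s u0 := by
  unfold mSU0 mSU02
  rw [Finset.sum_comm]
  exact Finset.single_le_sum
    (f := fun u2 => ∑ u1, qMD qS qU s u0 u1 u2)
    (fun i _ => Finset.sum_nonneg fun _ _ => qMD_nonneg qS qU _ _ _ _) (Finset.mem_univ u2)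

lemma sum_mSU0_u0 (s : S) : ∑ u0, mSU0 qS qU s u0 = qS.p s := by
  have h := (qU s).sum_eq_one
  rw [Fintype.sum_prod_type] at h
  simp_rw [Fintype.sum_prod_type] at h
  unfold mSU0
  simp_rw [qMD, ← Finset.mul_sum]
  rw [h, mul_one]

lemma mSU0_le_qSp (s : S) (u0 : U0) : mSU0 qS qU s u0 ≤ qS.p s := by
  rw [← sum_mSU0_u0 qS qU s]
  exact Finset.single_le_sum (fun i _ => mSU0_nonneg qS qU s i) (Finset.mem_univ u0)

lemma qMD_le_qSp (s : S) (u0 : U0) (u1 : U1) (u2 : U2) :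
    qMD qS qU s u0 u1 u2 ≤ qS.p s :=
  ((qMD_le_mSU01 qS qU s u0 u1 u2).trans (mSU01_le_mSU0 qS qU s u0 u1)).trans
    (mSU0_le_qSp qS qU s u0)

lemma sum_mU0_eq_one : ∑ u0, mU0 qS qU u0 = 1 := by
  unfold mU0
  rw [Finset.sum_comm]
  simp_rw [sum_mSU0_u0]
  exact qS.sum_eq_one

lemma sum_mU01_u1 (u0 : U0) : ∑ u1, mU01 qS qU u0 u1 = mU0 qS qU u0 := by
  unfold mU01 mU0 mSU0
  rw [Finset.sum_comm]
  apply Finset.sum_congr rfl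
  intro s _
  rfl

lemma sum_mU02_u2 (u0 : U0) : ∑ u2, mU02 qS qU u0 u2 = mU0 qS qU u0 := by
  unfold mU02 mU0 mSU02 mSU0
  rw [Finset.sum_comm]
  exact Finset.sum_congr rfl fun s _ => Finset.sum_comm

end MDHelpers

section MDHelpers2
open Classical Finset

variable (qS : FinPMF S) (qU : S → FinPMF (U0 × U1 × U2))

/-- conditional pmf of U1 given U0 (uniform junk when mU0 = 0) -/
noncomputable def pC1 (u0 : U0) (u1 : U1) : ℝ :=
  if mU0 qS qU u0 = 0 then ((Fintype.card U1 : ℕ) : ℝ)⁻¹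
  else mU01 qS qU u0 u1 / mU0 qS qU u0

noncomputable def pC2 (u0 : U0) (u2 : U2) : ℝ :=
  if mU0 qS qU u0 = 0 then ((Fintype.card U2 : ℕ) : ℝ)⁻¹
  else mU02 qS qU u0 u2 / mU0 qS qU u0

lemma pC1_nonneg (u0 : U0) (u1 : U1) : 0 ≤ pC1 qS qU u0 u1 := by
  unfold pC1; split
  · positivity
  · exact div_nonneg (mU01_nonneg qS qU u0 u1) (mU0_nonneg qS qU u0)

lemma pC2_nonneg (u0 : U0) (u2 : U2) : 0 ≤ pC2 qS qU u0 u2 := by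
  unfold pC2; split
  · positivity
  · exact div_nonneg (mU02_nonneg qS qU u0 u2) (mU0_nonneg qS qU u0)

lemma sum_pC1 [Nonempty U1] (u0 : U0) : ∑ u1, pC1 qS qU u0 u1 = 1 := by
  unfold pC1
  by_cases h : mU0 qS qU u0 = 0
  · simp only [h, if_true, eq_self_iff_true, if_pos]
    rw [Finset.sum_const, Finset.card_univ, nsmul_eq_mul]
    rw [mul_inv_cancel₀]
    exact_mod_cast Fintype.card_ne_zero
  · simp only [h, if_false]
    rw [← Finset.sum_div, sum_mU01_u1, div_self h]

lemma sum_pC2 [Nonempty U2] (u0 : U0) : ∑ u2, pC2 qS qU u0 u2 = 1 := by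
  unfold pC2
  by_cases h : mU0 qS qU u0 = 0
  · simp only [h, if_true, eq_self_iff_true, if_pos]
    rw [Finset.sum_const, Finset.card_univ, nsmul_eq_mul]
    rw [mul_inv_cancel₀]
    exact_mod_cast Fintype.card_ne_zero
  · simp only [h, if_false]
    rw [← Finset.sum_div, sum_mU02_u2, div_self h]

/-- the encoder importance weight -/
noncomputable def wgt (s : S) (u0 : U0) (u1 : U1) (u2 : U2) : ℝ :=
  qMD qS qU s u0 u1 u2 * mU0 qS qU u0 / (mU01 qS qU u0 u1 * mU02 qS qU u0 u2)

lemma wgt_nonneg (s : S) (u0 : U0) (u1 : U1) (u2 : U2) : 0 ≤ wgt qS qU s u0 u1 u2 :=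
  div_nonneg (mul_nonneg (qMD_nonneg qS qU s u0 u1 u2) (mU0_nonneg qS qU u0))
    (mul_nonneg (mU01_nonneg qS qU u0 u1) (mU02_nonneg qS qU u0 u2))

/-- all marginals positive when the joint is -/
lemma md_pos (s : S) (u0 : U0) (u1 : U1) (u2 : U2) (h : 0 < qMD qS qU s u0 u1 u2) :
    0 < qS.p s ∧ 0 < mU0 qS qU u0 ∧ 0 < mU01 qS qU u0 u1 ∧ 0 < mU02 qS qU u0 u2 ∧
      0 < mU012 qS qU u0 u1 u2 ∧ 0 < mSU0 qS qU s u0 ∧ 0 < mSU01 qS qU s u0 u1 ∧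
      0 < mSU02 qS qU s u0 u2 :=
  ⟨lt_of_lt_of_le h (qMD_le_qSp qS qU s u0 u1 u2),
   lt_of_lt_of_le h (((qMD_le_mSU01 qS qU s u0 u1 u2).trans
      (mSU01_le_mSU0 qS qU s u0 u1)).trans (mSU0_le_mU0 qS qU s u0)),
   lt_of_lt_of_le h ((qMD_le_mSU01 qS qU s u0 u1 u2).trans (mSU01_le_mU01 qS qU s u0 u1)),
   lt_of_lt_of_le h ((qMD_le_mSU02 qS qU s u0 u1 u2).trans (mSU02_le_mU02 qS qU s u0 u2)),
   lt_of_lt_of_le h (qMD_le_mU012 qS qU s u0 u1 u2),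
   lt_of_lt_of_le h ((qMD_le_mSU01 qS qU s u0 u1 u2).trans (mSU01_le_mSU0 qS qU s u0 u1)),
   lt_of_lt_of_le h (qMD_le_mSU01 qS qU s u0 u1 u2),
   lt_of_lt_of_le h (qMD_le_mSU02 qS qU s u0 u1 u2)⟩

lemma qMD_eq_zero_of_qSp (s : S) (u0 : U0) (u1 : U1) (u2 : U2) (h : qS.p s = 0) :
    qMD qS qU s u0 u1 u2 = 0 := by
  unfold qMD; rw [h, zero_mul]

/-- rho * wgt = qMD -/
lemma rho_mul_wgt (s : S) (u0 : U0) (u1 : U1) (u2 : U2) :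
    mU0 qS qU u0 * pC1 qS qU u0 u1 * pC2 qS qU u0 u2 * wgt qS qU s u0 u1 u2
      = qMD qS qU s u0 u1 u2 := by
  rcases eq_or_lt_of_le (qMD_nonneg qS qU s u0 u1 u2) with h | h
  · rw [wgt, ← h, zero_mul, zero_div, mul_zero]
  · obtain ⟨_, h0, h01, h02, _, _, _, _⟩ := md_pos qS qU s u0 u1 u2 h
    rw [pC1, pC2, if_neg (ne_of_gt h0), if_neg (ne_of_gt h0), wgt]
    field_simp

/-- E1: full average of wgt equals qS.p s -/
lemma sum_rho_wgt (s : S) :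
    ∑ u0, ∑ u1, ∑ u2, mU0 qS qU u0 * pC1 qS qU u0 u1 * pC2 qS qU u0 u2 *
      wgt qS qU s u0 u1 u2 = qS.p s := by
  simp_rw [rho_mul_wgt]
  exact sum_mSU0_u0 qS qU s

/-- E5 -/
lemma wgt_le_rpow (s : S) (u0 : U0) (u1 : U1) (u2 : U2) :
    wgt qS qU s u0 u1 u2 ≤ qS.p s *
      (2 : ℝ) ^ (iSU012 qS qU s u0 u1 u2 + iU1U2cU0 qS qU u0 u1 u2) := by
  rcases eq_or_lt_of_le (qMD_nonneg qS qU s u0 u1 u2) with h | h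
  · rw [wgt, ← h, zero_mul, zero_div]
    exact mul_nonneg (qS.nonneg s) (Real.rpow_pos_of_pos (by norm_num) _).le
  · obtain ⟨hs, h0, h01, h02, h012, _, _, _⟩ := md_pos qS qU s u0 u1 u2 h
    rw [Real.rpow_add (by norm_num : (0:ℝ) < 2), iSU012, iU1U2cU0,
      Real.rpow_logb (by norm_num) (by norm_num) (by positivity),
      Real.rpow_logb (by norm_num) (by norm_num) (by positivity), wgt]
    apply le_of_eq
    field_simp

/-- E3 pointwise -/
lemma pC2_mul_wgt (s : S) (u0 : U0) (u1 : U1) (u2 : U2) :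
    pC2 qS qU u0 u2 * wgt qS qU s u0 u1 u2 = qMD qS qU s u0 u1 u2 / mU01 qS qU u0 u1 := by
  rcases eq_or_lt_of_le (qMD_nonneg qS qU s u0 u1 u2) with h | h
  · rw [wgt, ← h, zero_mul, zero_div, mul_zero, zero_div]
  · obtain ⟨_, h0, h01, h02, _, _, _, _⟩ := md_pos qS qU s u0 u1 u2 h
    rw [pC2, if_neg (ne_of_gt h0), wgt]
    field_simp

lemma pC1_mul_wgt (s : S) (u0 : U0) (u1 : U1) (u2 : U2) :
    pC1 qS qU u0 u1 * wgt qS qU s u0 u1 u2 = qMD qS qU s u0 u1 u2 / mU02 qS qU u0 u2 := by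
  rcases eq_or_lt_of_le (qMD_nonneg qS qU s u0 u1 u2) with h | h
  · rw [wgt, ← h, zero_mul, zero_div, mul_zero, zero_div]
  · obtain ⟨_, h0, h01, h02, _, _, _, _⟩ := md_pos qS qU s u0 u1 u2 h
    rw [pC1, if_neg (ne_of_gt h0), wgt]
    field_simp

lemma pC1_pC2_mul_wgt (s : S) (u0 : U0) (u1 : U1) (u2 : U2) :
    pC1 qS qU u0 u1 * pC2 qS qU u0 u2 * wgt qS qU s u0 u1 u2
      = qMD qS qU s u0 u1 u2 / mU0 qS qU u0 := by
  rcases eq_or_lt_of_le (qMD_nonneg qS qU s u0 u1 u2) with h | h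
  · rw [wgt, ← h, zero_mul, zero_div, mul_zero, zero_div]
  · obtain ⟨_, h0, h01, h02, _, _, _, _⟩ := md_pos qS qU s u0 u1 u2 h
    rw [pC1, pC2, if_neg (ne_of_gt h0), if_neg (ne_of_gt h0), wgt]
    field_simp

/-- generic: ratio of partial marginals bounded by q(s) 2^(logb ratio) -/
lemma ratio_le_rpow (qs A B : ℝ) (hA : 0 ≤ A) (hAq : A ≤ qs) (hAB : A ≤ B) :
    A / B ≤ qs * (2 : ℝ) ^ (Real.logb 2 (A / (qs * B))) := by
  rcases eq_or_lt_of_le hA with h | h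
  · rw [← h, zero_div]
    exact mul_nonneg (le_trans hA hAq) (Real.rpow_pos_of_pos (by norm_num) _).le
  · have hq : 0 < qs := lt_of_lt_of_le h hAq
    have hB : 0 < B := lt_of_lt_of_le h hAB
    rw [Real.rpow_logb (by norm_num) (by norm_num) (by positivity)]
    apply le_of_eq
    field_simp

/-- E3 -/
lemma sum_pC2_wgt_le (s : S) (u0 : U0) (u1 : U1) :
    ∑ u2, pC2 qS qU u0 u2 * wgt qS qU s u0 u1 u2
      ≤ qS.p s * (2 : ℝ) ^ (iSU01 qS qU s u0 u1) := by
  simp_rw [pC2_mul_wgt, ← Finset.sum_div]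
  exact ratio_le_rpow (qS.p s) _ _ (mSU01_nonneg qS qU s u0 u1)
    ((mSU01_le_mSU0 qS qU s u0 u1).trans (mSU0_le_qSp qS qU s u0))
    (mSU01_le_mU01 qS qU s u0 u1)

/-- E4 -/
lemma sum_pC1_wgt_le (s : S) (u0 : U0) (u2 : U2) :
    ∑ u1, pC1 qS qU u0 u1 * wgt qS qU s u0 u1 u2
      ≤ qS.p s * (2 : ℝ) ^ (iSU02 qS qU s u0 u2) := by
  simp_rw [pC1_mul_wgt, ← Finset.sum_div]
  exact ratio_le_rpow (qS.p s) _ _ (mSU02_nonneg qS qU s u0 u2)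
    ((mSU02_le_mSU0 qS qU s u0 u2).trans (mSU0_le_qSp qS qU s u0))
    (mSU02_le_mU02 qS qU s u0 u2)

/-- E2 -/
lemma sum_pC1_pC2_wgt_le (s : S) (u0 : U0) :
    ∑ u1, ∑ u2, pC1 qS qU u0 u1 * pC2 qS qU u0 u2 * wgt qS qU s u0 u1 u2
      ≤ qS.p s * (2 : ℝ) ^ (iSU0 qS qU s u0) := by
  simp_rw [pC1_pC2_mul_wgt, ← Finset.sum_div]
  exact ratio_le_rpow (qS.p s) _ _ (mSU0_nonneg qS qU s u0)
    (mSU0_le_qSp qS qU s u0) (mSU0_le_mU0 qS qU s u0)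

end MDHelpers2

section SPLemmas
open Classical Finset

/-- sum over function space of a product factorizes -/
lemma sum_fn_prod {ι α : Type} [Fintype ι] [DecidableEq ι] [Fintype α] (H : ι → α → ℝ) :
    ∑ f : ι → α, ∏ l, H l (f l) = ∏ l, ∑ a, H l a := by
  rw [Finset.prod_univ_sum, ← Fintype.piFinset_univ]

lemma sum_fn_prod_const {ι α : Type} [Fintype ι] [DecidableEq ι] [Fintype α] (h : α → ℝ) :
    ∑ f : ι → α, ∏ l, h (f l) = (∑ a, h a) ^ (Fintype.card ι) := by
  rw [sum_fn_prod]
  simp [Finset.prod_const, Finset.card_univ]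

/-- one-point extraction -/
lemma sum_fn_one {ι α : Type} [Fintype ι] [DecidableEq ι] [Fintype α] (h : α → ℝ)
    (hsum : ∑ a, h a = 1) (l0 : ι) (F : α → ℝ) :
    ∑ f : ι → α, (∏ l, h (f l)) * F (f l0) = ∑ a, h a * F a := by
  have key : ∀ f : ι → α, (∏ l, h (f l)) * F (f l0)
      = ∏ l, (h (f l) * (if l = l0 then F (f l) else 1)) := by
    intro f
    rw [Finset.prod_mul_distrib]
    congr 1
    rw [Finset.prod_ite_eq' Finset.univ l0 (fun l => F (f l))]
    simp
  simp_rw [key]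
  rw [sum_fn_prod (fun l a => h a * if l = l0 then F a else 1)]
  have h2 : ∀ l : ι, (∑ a, h a * (if l = l0 then F a else 1))
      = if l = l0 then ∑ a, h a * F a else 1 := by
    intro l
    by_cases hl : l = l0 <;> simp [hl, hsum]
  simp_rw [h2]
  rw [Finset.prod_ite_eq' Finset.univ l0 (fun _ => ∑ a, h a * F a)]
  simp

/-- two-point extraction, separable form -/
lemma sum_fn_two_sep {ι α : Type} [Fintype ι] [DecidableEq ι] [Fintype α] (h : α → ℝ)
    (hsum : ∑ a, h a = 1) {l0 l1 : ι} (hne : l0 ≠ l1) (F G : α → ℝ) :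
    ∑ f : ι → α, (∏ l, h (f l)) * (F (f l0) * G (f l1))
      = (∑ a, h a * F a) * (∑ a, h a * G a) := by
  have key : ∀ f : ι → α, (∏ l, h (f l)) * (F (f l0) * G (f l1))
      = ∏ l, (h (f l) * ((if l = l0 then F (f l) else 1) * (if l = l1 then G (f l) else 1))) := by
    intro f
    rw [Finset.prod_mul_distrib, Finset.prod_mul_distrib]
    rw [Finset.prod_ite_eq' Finset.univ l0 (fun l => F (f l)),
      Finset.prod_ite_eq' Finset.univ l1 (fun l => G (f l))]
    simp [mul_assoc]
  simp_rw [key]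
  rw [sum_fn_prod (fun l a => h a * ((if l = l0 then F a else 1) * (if l = l1 then G a else 1)))]
  have h2 : ∀ l : ι, (∑ a, h a * ((if l = l0 then F a else 1) * (if l = l1 then G a else 1)))
      = if l = l0 then ∑ a, h a * F a else if l = l1 then ∑ a, h a * G a else 1 := by
    intro l
    by_cases hl : l = l0
    · subst hl
      simp [if_neg hne]
    · by_cases hl1 : l = l1 <;> simp [hl, hl1, hsum, Ne.symm hne]
  simp_rw [h2]
  rw [← Finset.mul_prod_erase Finset.univ _ (Finset.mem_univ l0), if_pos rfl]
  rw [← Finset.mul_prod_erase (Finset.univ.erase l0) _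
      (Finset.mem_erase.mpr ⟨hne.symm, Finset.mem_univ l1⟩)]
  rw [if_neg (Ne.symm hne), if_pos rfl]
  rw [Finset.prod_eq_one, mul_one]
  intro x hx
  obtain ⟨hx1, hx0⟩ := Finset.mem_erase.mp hx
  rw [if_neg (Finset.mem_erase.mp hx0).1, if_neg hx1]

/-- two-point extraction, general bivariate form -/
lemma sum_fn_two {ι α : Type} [Fintype ι] [DecidableEq ι] [Fintype α] (h : α → ℝ)
    (hsum : ∑ a, h a = 1) {l0 l1 : ι} (hne : l0 ≠ l1) (F : α → α → ℝ) :
    ∑ f : ι → α, (∏ l, h (f l)) * F (f l0) (f l1)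
      = ∑ a, ∑ b, (h a * h b) * F a b := by
  have expand : ∀ f : ι → α, F (f l0) (f l1)
      = ∑ a, ∑ b, ((if f l0 = a then (1:ℝ) else 0) * (if f l1 = b then (1:ℝ) else 0)) * F a b := by
    intro f
    rw [Finset.sum_eq_single_of_mem (f l0) (Finset.mem_univ _)]
    · rw [Finset.sum_eq_single_of_mem (f l1) (Finset.mem_univ _)]
      · simp
      · intro b _ hb
        simp [Ne.symm hb]
    · intro a _ ha
      simp [Ne.symm ha]
  simp_rw [expand, Finset.mul_sum]
  rw [Finset.sum_comm]
  apply Finset.sum_congr rfl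
  intro a _
  rw [Finset.sum_comm]
  apply Finset.sum_congr rfl
  intro b _
  have : ∀ f : ι → α, (∏ l, h (f l)) *
      (((if f l0 = a then (1:ℝ) else 0) * (if f l1 = b then (1:ℝ) else 0)) * F a b)
      = ((∏ l, h (f l)) * ((if f l0 = a then (1:ℝ) else 0) * (if f l1 = b then (1:ℝ) else 0)))
        * F a b := by
    intro f; ring
  simp_rw [this]
  rw [← Finset.sum_mul]
  rw [sum_fn_two_sep h hsum hne (fun x => if x = a then (1:ℝ) else 0) (fun x => if x = b then (1:ℝ) else 0)]
  congr 1
  rw [Finset.sum_eq_single_of_mem a (Finset.mem_univ _) (fun x _ hx => by simp [hx]),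
    Finset.sum_eq_single_of_mem b (Finset.mem_univ _) (fun x _ hx => by simp [hx])]
  simp

/-- sum of an ite-constant function -/
lemma sum_ite_const {ι : Type} [Fintype ι] [DecidableEq ι] [Nonempty ι] (i0 : ι) (x y : ℝ) :
    ∑ i, (if i = i0 then x else y) = x + ((Fintype.card ι : ℝ) - 1) * y := by
  rw [← Finset.add_sum_erase Finset.univ _ (Finset.mem_univ i0), if_pos rfl]
  congr 1
  rw [Finset.sum_congr rfl (fun i hi => if_neg (Finset.mem_erase.mp hi).1),
    Finset.sum_const, Finset.card_erase_of_mem (Finset.mem_univ i0), Finset.card_univ,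
    nsmul_eq_mul]
  congr 1
  have : 0 < Fintype.card ι := Fintype.card_pos
  push_cast [Nat.cast_sub this]
  ring

/-- point mass pmf -/
noncomputable def dirac {R : Type} [Fintype R] (r : R) : FinPMF R :=
  ⟨fun r' => if r' = r then 1 else 0, fun a => by by_cases h : a = r <;> simp [h], by simp⟩

lemma tangent_ineq (W a : ℝ) (hW : 0 < W) (ha : 0 < a) : 2 / a - W / a ^ 2 ≤ 1 / W := by
  rw [div_sub_div _ _ (ne_of_gt ha) (by positivity), div_le_div_iff₀ (by positivity) hW]
  nlinarith [sq_nonneg (a - W)]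

end SPLemmas

section BlockLemmas
open Classical Finset

variable (qS : FinPMF S) (qU : S → FinPMF (U0 × U1 × U2))

/-- one block of the random codebook -/
noncomputable def nuB {n1 n2 : ℕ} (b : U0 × (Fin n1 → U1) × (Fin n2 → U2)) : ℝ :=
  mU0 qS qU b.1 * ((∏ l, pC1 qS qU b.1 (b.2.1 l)) * (∏ l, pC2 qS qU b.1 (b.2.2 l)))

lemma nuB_nonneg {n1 n2 : ℕ} (b : U0 × (Fin n1 → U1) × (Fin n2 → U2)) :
    0 ≤ nuB qS qU b :=
  mul_nonneg (mU0_nonneg qS qU _) (mul_nonneg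
    (Finset.prod_nonneg fun _ _ => pC1_nonneg qS qU _ _)
    (Finset.prod_nonneg fun _ _ => pC2_nonneg qS qU _ _))

lemma sum_nuB [Nonempty U1] [Nonempty U2] {n1 n2 : ℕ} :
    ∑ b : U0 × (Fin n1 → U1) × (Fin n2 → U2), nuB qS qU b = 1 := by
  unfold nuB
  rw [Fintype.sum_prod_type]
  simp_rw [Fintype.sum_prod_type]
  have h2 : ∀ (u0 : U0) (f1 : Fin n1 → U1),
      ∑ f2 : Fin n2 → U2, mU0 qS qU u0 * ((∏ l, pC1 qS qU u0 (f1 l)) *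
        (∏ l, pC2 qS qU u0 (f2 l)))
      = mU0 qS qU u0 * (∏ l, pC1 qS qU u0 (f1 l)) := by
    intro u0 f1
    rw [← Finset.mul_sum, ← Finset.mul_sum, sum_fn_prod_const, sum_pC2, one_pow, mul_one]
  simp_rw [h2]
  have h1 : ∀ u0 : U0,
      ∑ f1 : Fin n1 → U1, mU0 qS qU u0 * (∏ l, pC1 qS qU u0 (f1 l)) = mU0 qS qU u0 := by
    intro u0
    rw [← Finset.mul_sum, sum_fn_prod_const, sum_pC1, one_pow, mul_one]
  simp_rw [h1]
  exact sum_mU0_eq_one qS qU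

variable [Nonempty U1] [Nonempty U2]

lemma block_one {n1 n2 : ℕ} (l1 : Fin n1) (l2 : Fin n2) (F : U0 → U1 → U2 → ℝ) :
    ∑ b : U0 × (Fin n1 → U1) × (Fin n2 → U2),
        nuB qS qU b * F b.1 (b.2.1 l1) (b.2.2 l2)
      = ∑ u0, mU0 qS qU u0 * ∑ u1, pC1 qS qU u0 u1 * ∑ u2, pC2 qS qU u0 u2 * F u0 u1 u2 := by
  unfold nuB
  rw [Fintype.sum_prod_type]
  simp_rw [Fintype.sum_prod_type]
  apply Finset.sum_congr rfl
  intro u0 _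
  have ha : ∀ (f1 : Fin n1 → U1) (f2 : Fin n2 → U2),
      mU0 qS qU u0 * ((∏ l, pC1 qS qU u0 (f1 l)) * (∏ l, pC2 qS qU u0 (f2 l))) *
        F u0 (f1 l1) (f2 l2)
      = mU0 qS qU u0 * ((∏ l, pC1 qS qU u0 (f1 l)) *
          ((∏ l, pC2 qS qU u0 (f2 l)) * F u0 (f1 l1) (f2 l2))) := by
    intro f1 f2; ring
  simp_rw [ha, ← Finset.mul_sum]
  have hb : ∀ x : U1, ∑ f2 : Fin n2 → U2,
      (∏ l, pC2 qS qU u0 (f2 l)) * F u0 x (f2 l2) = ∑ u2, pC2 qS qU u0 u2 * F u0 x u2 :=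
    fun x => sum_fn_one (pC2 qS qU u0) (sum_pC2 qS qU u0) l2 (fun u2 => F u0 x u2)
  simp_rw [hb]
  congr 1
  exact sum_fn_one (pC1 qS qU u0) (sum_pC1 qS qU u0) l1
    (fun u1 => ∑ u2, pC2 qS qU u0 u2 * F u0 u1 u2)

lemma block_two22 {n1 n2 : ℕ} (l1 : Fin n1) {l2 l2' : Fin n2} (h : l2 ≠ l2')
    (F G : U0 → U1 → U2 → ℝ) :
    ∑ b : U0 × (Fin n1 → U1) × (Fin n2 → U2),
        nuB qS qU b * (F b.1 (b.2.1 l1) (b.2.2 l2) * G b.1 (b.2.1 l1) (b.2.2 l2'))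
      = ∑ u0, mU0 qS qU u0 * ∑ u1, pC1 qS qU u0 u1 *
          ((∑ u2, pC2 qS qU u0 u2 * F u0 u1 u2) * (∑ u2, pC2 qS qU u0 u2 * G u0 u1 u2)) := by
  unfold nuB
  rw [Fintype.sum_prod_type]
  simp_rw [Fintype.sum_prod_type]
  apply Finset.sum_congr rfl
  intro u0 _
  have ha : ∀ (f1 : Fin n1 → U1) (f2 : Fin n2 → U2),
      mU0 qS qU u0 * ((∏ l, pC1 qS qU u0 (f1 l)) * (∏ l, pC2 qS qU u0 (f2 l))) *
        (F u0 (f1 l1) (f2 l2) * G u0 (f1 l1) (f2 l2'))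
      = mU0 qS qU u0 * ((∏ l, pC1 qS qU u0 (f1 l)) *
          ((∏ l, pC2 qS qU u0 (f2 l)) * (F u0 (f1 l1) (f2 l2) * G u0 (f1 l1) (f2 l2')))) := by
    intro f1 f2; ring
  simp_rw [ha, ← Finset.mul_sum]
  have hb : ∀ x : U1, ∑ f2 : Fin n2 → U2,
      (∏ l, pC2 qS qU u0 (f2 l)) * (F u0 x (f2 l2) * G u0 x (f2 l2'))
      = (∑ u2, pC2 qS qU u0 u2 * F u0 x u2) * (∑ u2, pC2 qS qU u0 u2 * G u0 x u2) :=
    fun x => sum_fn_two_sep (pC2 qS qU u0) (sum_pC2 qS qU u0) h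
      (fun u2 => F u0 x u2) (fun u2 => G u0 x u2)
  simp_rw [hb]
  congr 1
  exact sum_fn_one (pC1 qS qU u0) (sum_pC1 qS qU u0) l1
    (fun u1 => (∑ u2, pC2 qS qU u0 u2 * F u0 u1 u2) * (∑ u2, pC2 qS qU u0 u2 * G u0 u1 u2))

lemma block_two11 {n1 n2 : ℕ} {l1 l1' : Fin n1} (h : l1 ≠ l1') (l2 : Fin n2)
    (F G : U0 → U1 → U2 → ℝ) :
    ∑ b : U0 × (Fin n1 → U1) × (Fin n2 → U2),
        nuB qS qU b * (F b.1 (b.2.1 l1) (b.2.2 l2) * G b.1 (b.2.1 l1') (b.2.2 l2))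
      = ∑ u0, mU0 qS qU u0 * ∑ u1, ∑ u1', (pC1 qS qU u0 u1 * pC1 qS qU u0 u1') *
          ∑ u2, pC2 qS qU u0 u2 * (F u0 u1 u2 * G u0 u1' u2) := by
  unfold nuB
  rw [Fintype.sum_prod_type]
  simp_rw [Fintype.sum_prod_type]
  apply Finset.sum_congr rfl
  intro u0 _
  have ha : ∀ (f1 : Fin n1 → U1) (f2 : Fin n2 → U2),
      mU0 qS qU u0 * ((∏ l, pC1 qS qU u0 (f1 l)) * (∏ l, pC2 qS qU u0 (f2 l))) *
        (F u0 (f1 l1) (f2 l2) * G u0 (f1 l1') (f2 l2))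
      = mU0 qS qU u0 * ((∏ l, pC1 qS qU u0 (f1 l)) *
          ((∏ l, pC2 qS qU u0 (f2 l)) * (F u0 (f1 l1) (f2 l2) * G u0 (f1 l1') (f2 l2)))) := by
    intro f1 f2; ring
  simp_rw [ha, ← Finset.mul_sum]
  have hb : ∀ x y : U1, ∑ f2 : Fin n2 → U2,
      (∏ l, pC2 qS qU u0 (f2 l)) * (F u0 x (f2 l2) * G u0 y (f2 l2))
      = ∑ u2, pC2 qS qU u0 u2 * (F u0 x u2 * G u0 y u2) :=
    fun x y => sum_fn_one (pC2 qS qU u0) (sum_pC2 qS qU u0) l2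
      (fun u2 => F u0 x u2 * G u0 y u2)
  simp_rw [hb]
  congr 1
  exact sum_fn_two (pC1 qS qU u0) (sum_pC1 qS qU u0) h
    (fun x y => ∑ u2, pC2 qS qU u0 u2 * (F u0 x u2 * G u0 y u2))

lemma block_two_both {n1 n2 : ℕ} {l1 l1' : Fin n1} (h1 : l1 ≠ l1') {l2 l2' : Fin n2}
    (h2 : l2 ≠ l2') (F G : U0 → U1 → U2 → ℝ) :
    ∑ b : U0 × (Fin n1 → U1) × (Fin n2 → U2),
        nuB qS qU b * (F b.1 (b.2.1 l1) (b.2.2 l2) * G b.1 (b.2.1 l1') (b.2.2 l2'))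
      = ∑ u0, mU0 qS qU u0 *
          ((∑ u1, pC1 qS qU u0 u1 * ∑ u2, pC2 qS qU u0 u2 * F u0 u1 u2) *
           (∑ u1, pC1 qS qU u0 u1 * ∑ u2, pC2 qS qU u0 u2 * G u0 u1 u2)) := by
  unfold nuB
  rw [Fintype.sum_prod_type]
  simp_rw [Fintype.sum_prod_type]
  apply Finset.sum_congr rfl
  intro u0 _
  have ha : ∀ (f1 : Fin n1 → U1) (f2 : Fin n2 → U2),
      mU0 qS qU u0 * ((∏ l, pC1 qS qU u0 (f1 l)) * (∏ l, pC2 qS qU u0 (f2 l))) *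
        (F u0 (f1 l1) (f2 l2) * G u0 (f1 l1') (f2 l2'))
      = mU0 qS qU u0 * ((∏ l, pC1 qS qU u0 (f1 l)) *
          ((∏ l, pC2 qS qU u0 (f2 l)) * (F u0 (f1 l1) (f2 l2) * G u0 (f1 l1') (f2 l2')))) := by
    intro f1 f2; ring
  simp_rw [ha, ← Finset.mul_sum]
  have hb : ∀ x y : U1, ∑ f2 : Fin n2 → U2,
      (∏ l, pC2 qS qU u0 (f2 l)) * (F u0 x (f2 l2) * G u0 y (f2 l2'))
      = (∑ u2, pC2 qS qU u0 u2 * F u0 x u2) * (∑ u2, pC2 qS qU u0 u2 * G u0 y u2) :=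
    fun x y => sum_fn_two_sep (pC2 qS qU u0) (sum_pC2 qS qU u0) h2
      (fun u2 => F u0 x u2) (fun u2 => G u0 y u2)
  simp_rw [hb]
  congr 1
  have := sum_fn_two_sep (pC1 qS qU u0) (sum_pC1 qS qU u0) h1
    (fun u1 => ∑ u2, pC2 qS qU u0 u2 * F u0 u1 u2)
    (fun u1 => ∑ u2, pC2 qS qU u0 u2 * G u0 u1 u2)
  rw [← this]

end BlockLemmas

section CBLemmas
open Classical Finset

variable (qS : FinPMF S) (qU : S → FinPMF (U0 × U1 × U2))

lemma factored_eq3 (f : U0 → U1 → U2 → ℝ) :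
    ∑ u0, mU0 qS qU u0 * ∑ u1, pC1 qS qU u0 u1 * ∑ u2, pC2 qS qU u0 u2 * f u0 u1 u2
      = ∑ u0, ∑ u1, ∑ u2,
          (mU0 qS qU u0 * (pC1 qS qU u0 u1 * pC2 qS qU u0 u2)) * f u0 u1 u2 := by
  simp_rw [Finset.mul_sum]
  exact Finset.sum_congr rfl fun _ _ => Finset.sum_congr rfl fun _ _ =>
    Finset.sum_congr rfl fun _ _ => by ring

lemma rhoPhiBeta_factored (Φ β : U0 → U1 → U2 → ℝ) :
    ∑ u0, ∑ u1, ∑ u2, (mU0 qS qU u0 * (pC1 qS qU u0 u1 * pC2 qS qU u0 u2)) *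
        Φ u0 u1 u2 * β u0 u1 u2
      = ∑ u0, mU0 qS qU u0 * ∑ u1, pC1 qS qU u0 u1 *
          ∑ u2, pC2 qS qU u0 u2 * (Φ u0 u1 u2 * β u0 u1 u2) :=
  (Finset.sum_congr rfl fun _ _ => Finset.sum_congr rfl fun _ _ =>
    Finset.sum_congr rfl fun _ _ => by ring).trans
    (factored_eq3 qS qU (fun u0 u1 u2 => Φ u0 u1 u2 * β u0 u1 u2)).symm

variable [Nonempty U1] [Nonempty U2]

lemma sum_mu_one {n0 n1 n2 : ℕ} :
    ∑ C : Fin n0 → U0 × (Fin n1 → U1) × (Fin n2 → U2), (∏ j, nuB qS qU (C j)) = 1 := by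
  rw [sum_fn_prod_const (nuB qS qU), sum_nuB, one_pow]

lemma cb_one {n0 n1 n2 : ℕ} (t : Fin n0 × Fin n1 × Fin n2) (F : U0 → U1 → U2 → ℝ) :
    ∑ C : Fin n0 → U0 × (Fin n1 → U1) × (Fin n2 → U2),
        (∏ j, nuB qS qU (C j)) * F (C t.1).1 ((C t.1).2.1 t.2.1) ((C t.1).2.2 t.2.2)
      = ∑ u0, ∑ u1, ∑ u2,
          (mU0 qS qU u0 * (pC1 qS qU u0 u1 * pC2 qS qU u0 u2)) * F u0 u1 u2 := by
  rw [sum_fn_one (nuB qS qU) (sum_nuB qS qU) t.1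
    (fun b => F b.1 (b.2.1 t.2.1) (b.2.2 t.2.2))]
  rw [block_one qS qU t.2.1 t.2.2 F, factored_eq3]

/-- the per-pair bound function -/
noncomputable def betaF (s : S) {n0 n1 n2 : ℕ} (t t' : Fin n0 × Fin n1 × Fin n2)
    (u0 : U0) (u1 : U1) (u2 : U2) : ℝ :=
  if t'.1 = t.1 then
    (if t'.2.1 = t.2.1 then
      (if t'.2.2 = t.2.2 then
        qS.p s * (2:ℝ) ^ (iSU012 qS qU s u0 u1 u2 + iU1U2cU0 qS qU u0 u1 u2)
       else qS.p s * (2:ℝ) ^ (iSU01 qS qU s u0 u1))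
     else (if t'.2.2 = t.2.2 then qS.p s * (2:ℝ) ^ (iSU02 qS qU s u0 u2)
       else qS.p s * (2:ℝ) ^ (iSU0 qS qU s u0)))
  else qS.p s

/-- central cross-term bound -/
lemma cross_bound {n0 n1 n2 : ℕ} (s : S) (Φ : U0 → U1 → U2 → ℝ)
    (hΦ : ∀ u0 u1 u2, 0 ≤ Φ u0 u1 u2) (t t' : Fin n0 × Fin n1 × Fin n2) :
    ∑ C : Fin n0 → U0 × (Fin n1 → U1) × (Fin n2 → U2),
        (∏ j, nuB qS qU (C j)) *
          (Φ (C t.1).1 ((C t.1).2.1 t.2.1) ((C t.1).2.2 t.2.2) *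
           wgt qS qU s (C t'.1).1 ((C t'.1).2.1 t'.2.1) ((C t'.1).2.2 t'.2.2))
      ≤ ∑ u0, ∑ u1, ∑ u2,
          (mU0 qS qU u0 * (pC1 qS qU u0 u1 * pC2 qS qU u0 u2)) * Φ u0 u1 u2 *
            betaF qS qU s t t' u0 u1 u2 := by
  have hpc2Φ : ∀ u0 u1, 0 ≤ ∑ u2, pC2 qS qU u0 u2 * Φ u0 u1 u2 :=
    fun u0 u1 => Finset.sum_nonneg fun u2 _ =>
      mul_nonneg (pC2_nonneg qS qU u0 u2) (hΦ u0 u1 u2)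
  have hAΦ : ∀ u0, 0 ≤ ∑ u1, pC1 qS qU u0 u1 * ∑ u2, pC2 qS qU u0 u2 * Φ u0 u1 u2 :=
    fun u0 => Finset.sum_nonneg fun u1 _ =>
      mul_nonneg (pC1_nonneg qS qU u0 u1) (hpc2Φ u0 u1)
  by_cases hj : t'.1 = t.1
  · by_cases hl1 : t'.2.1 = t.2.1
    · by_cases hl2 : t'.2.2 = t.2.2
      · -- t' = t : same point, use E5
        simp only [betaF, hj, hl1, hl2, if_true]
        rw [sum_fn_one (nuB qS qU) (sum_nuB qS qU) t.1
          (fun b => Φ b.1 (b.2.1 t.2.1) (b.2.2 t.2.2) *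
            wgt qS qU s b.1 (b.2.1 t.2.1) (b.2.2 t.2.2))]
        rw [block_one qS qU t.2.1 t.2.2
          (fun u0 u1 u2 => Φ u0 u1 u2 * wgt qS qU s u0 u1 u2)]
        rw [rhoPhiBeta_factored qS qU Φ (fun u0 u1 u2 =>
          qS.p s * (2:ℝ) ^ (iSU012 qS qU s u0 u1 u2 + iU1U2cU0 qS qU u0 u1 u2))]
        apply Finset.sum_le_sum; intro u0 _
        apply mul_le_mul_of_nonneg_left _ (mU0_nonneg qS qU u0)
        apply Finset.sum_le_sum; intro u1 _
        apply mul_le_mul_of_nonneg_left _ (pC1_nonneg qS qU u0 u1)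
        apply Finset.sum_le_sum; intro u2 _
        apply mul_le_mul_of_nonneg_left _ (pC2_nonneg qS qU u0 u2)
        exact mul_le_mul_of_nonneg_left (wgt_le_rpow qS qU s u0 u1 u2) (hΦ u0 u1 u2)
      · -- same block, same l1, different l2 : E3
        simp only [betaF, hj, hl1, hl2, if_true, if_false]
        rw [sum_fn_one (nuB qS qU) (sum_nuB qS qU) t.1
          (fun b => Φ b.1 (b.2.1 t.2.1) (b.2.2 t.2.2) *
            wgt qS qU s b.1 (b.2.1 t.2.1) (b.2.2 t'.2.2))]
        rw [block_two22 qS qU t.2.1 (fun h => hl2 h.symm : t.2.2 ≠ t'.2.2) Φ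
          (fun u0 u1 u2 => wgt qS qU s u0 u1 u2)]
        rw [rhoPhiBeta_factored qS qU Φ (fun u0 u1 _ =>
          qS.p s * (2:ℝ) ^ (iSU01 qS qU s u0 u1))]
        apply Finset.sum_le_sum; intro u0 _
        apply mul_le_mul_of_nonneg_left _ (mU0_nonneg qS qU u0)
        apply Finset.sum_le_sum; intro u1 _
        apply mul_le_mul_of_nonneg_left _ (pC1_nonneg qS qU u0 u1)
        have e2 : ∑ u2, pC2 qS qU u0 u2 * (Φ u0 u1 u2 *
            (qS.p s * (2:ℝ) ^ (iSU01 qS qU s u0 u1)))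
            = (∑ u2, pC2 qS qU u0 u2 * Φ u0 u1 u2) *
              (qS.p s * (2:ℝ) ^ (iSU01 qS qU s u0 u1)) := by
          rw [Finset.sum_mul]
          exact Finset.sum_congr rfl fun _ _ => by ring
        rw [e2]
        exact mul_le_mul_of_nonneg_left (sum_pC2_wgt_le qS qU s u0 u1) (hpc2Φ u0 u1)
    · by_cases hl2 : t'.2.2 = t.2.2
      · -- same block, different l1, same l2 : E4
        simp only [betaF, hj, hl1, hl2, if_true, if_false]
        rw [sum_fn_one (nuB qS qU) (sum_nuB qS qU) t.1
          (fun b => Φ b.1 (b.2.1 t.2.1) (b.2.2 t.2.2) *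
            wgt qS qU s b.1 (b.2.1 t'.2.1) (b.2.2 t.2.2))]
        rw [block_two11 qS qU (fun h => hl1 h.symm : t.2.1 ≠ t'.2.1) t.2.2 Φ
          (fun u0 u1 u2 => wgt qS qU s u0 u1 u2)]
        rw [rhoPhiBeta_factored qS qU Φ (fun u0 _ u2 =>
          qS.p s * (2:ℝ) ^ (iSU02 qS qU s u0 u2))]
        apply Finset.sum_le_sum; intro u0 _
        apply mul_le_mul_of_nonneg_left _ (mU0_nonneg qS qU u0)
        have swap : ∀ u1 : U1, (∑ u1' : U1, (pC1 qS qU u0 u1 * pC1 qS qU u0 u1') *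
              ∑ u2, pC2 qS qU u0 u2 * (Φ u0 u1 u2 * wgt qS qU s u0 u1' u2))
            = pC1 qS qU u0 u1 * ∑ u2, (pC2 qS qU u0 u2 * Φ u0 u1 u2) *
                (∑ u1', pC1 qS qU u0 u1' * wgt qS qU s u0 u1' u2) := by
          intro u1
          simp_rw [Finset.mul_sum]
          rw [Finset.sum_comm]
          exact Finset.sum_congr rfl fun u2 _ => Finset.sum_congr rfl fun u1' _ => by ring
        simp_rw [swap]
        apply Finset.sum_le_sum; intro u1 _
        apply mul_le_mul_of_nonneg_left _ (pC1_nonneg qS qU u0 u1)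
        apply Finset.sum_le_sum; intro u2 _
        calc (pC2 qS qU u0 u2 * Φ u0 u1 u2) *
              (∑ u1', pC1 qS qU u0 u1' * wgt qS qU s u0 u1' u2)
            ≤ (pC2 qS qU u0 u2 * Φ u0 u1 u2) *
              (qS.p s * (2:ℝ) ^ (iSU02 qS qU s u0 u2)) :=
              mul_le_mul_of_nonneg_left (sum_pC1_wgt_le qS qU s u0 u2)
                (mul_nonneg (pC2_nonneg qS qU u0 u2) (hΦ u0 u1 u2))
          _ = pC2 qS qU u0 u2 * (Φ u0 u1 u2 *
              (qS.p s * (2:ℝ) ^ (iSU02 qS qU s u0 u2))) := by ring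
      · -- same block, both different : E2
        simp only [betaF, hj, hl1, hl2, if_true, if_false]
        rw [sum_fn_one (nuB qS qU) (sum_nuB qS qU) t.1
          (fun b => Φ b.1 (b.2.1 t.2.1) (b.2.2 t.2.2) *
            wgt qS qU s b.1 (b.2.1 t'.2.1) (b.2.2 t'.2.2))]
        rw [block_two_both qS qU (fun h => hl1 h.symm : t.2.1 ≠ t'.2.1)
          (fun h => hl2 h.symm : t.2.2 ≠ t'.2.2) Φ
          (fun u0 u1 u2 => wgt qS qU s u0 u1 u2)]
        rw [rhoPhiBeta_factored qS qU Φ (fun u0 _ _ =>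
          qS.p s * (2:ℝ) ^ (iSU0 qS qU s u0))]
        apply Finset.sum_le_sum; intro u0 _
        apply mul_le_mul_of_nonneg_left _ (mU0_nonneg qS qU u0)
        have e2 : ∀ u1, ∑ u2, pC2 qS qU u0 u2 * (Φ u0 u1 u2 *
            (qS.p s * (2:ℝ) ^ (iSU0 qS qU s u0)))
            = (∑ u2, pC2 qS qU u0 u2 * Φ u0 u1 u2) *
              (qS.p s * (2:ℝ) ^ (iSU0 qS qU s u0)) := by
          intro u1
          rw [Finset.sum_mul]
          exact Finset.sum_congr rfl fun _ _ => by ring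
        simp_rw [e2]
        have e1 : ∑ u1, pC1 qS qU u0 u1 * ((∑ u2, pC2 qS qU u0 u2 * Φ u0 u1 u2) *
            (qS.p s * (2:ℝ) ^ (iSU0 qS qU s u0)))
            = (∑ u1, pC1 qS qU u0 u1 * ∑ u2, pC2 qS qU u0 u2 * Φ u0 u1 u2) *
              (qS.p s * (2:ℝ) ^ (iSU0 qS qU s u0)) := by
          rw [Finset.sum_mul]
          exact Finset.sum_congr rfl fun _ _ => by ring
        rw [e1]
        apply mul_le_mul_of_nonneg_left _ (hAΦ u0)
        calc (∑ u1, pC1 qS qU u0 u1 * ∑ u2, pC2 qS qU u0 u2 * wgt qS qU s u0 u1 u2)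
            = ∑ u1, ∑ u2, pC1 qS qU u0 u1 * pC2 qS qU u0 u2 * wgt qS qU s u0 u1 u2 := by
              simp_rw [Finset.mul_sum]
              exact Finset.sum_congr rfl fun _ _ => Finset.sum_congr rfl fun _ _ => by ring
          _ ≤ _ := sum_pC1_pC2_wgt_le qS qU s u0
  · -- different blocks
    simp only [betaF, hj, if_false]
    rw [sum_fn_two_sep (nuB qS qU) (sum_nuB qS qU)
      (fun h => hj h.symm : t.1 ≠ t'.1)
      (fun b => Φ b.1 (b.2.1 t.2.1) (b.2.2 t.2.2))
      (fun b => wgt qS qU s b.1 (b.2.1 t'.2.1) (b.2.2 t'.2.2))]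
    rw [block_one qS qU t.2.1 t.2.2 Φ,
      block_one qS qU t'.2.1 t'.2.2 (fun u0 u1 u2 => wgt qS qU s u0 u1 u2)]
    have hw : (∑ u0, mU0 qS qU u0 * ∑ u1, pC1 qS qU u0 u1 *
        ∑ u2, pC2 qS qU u0 u2 * wgt qS qU s u0 u1 u2) = qS.p s := by
      rw [factored_eq3]
      rw [show (∑ u0, ∑ u1, ∑ u2, (mU0 qS qU u0 * (pC1 qS qU u0 u1 * pC2 qS qU u0 u2)) *
          wgt qS qU s u0 u1 u2)
        = ∑ u0, ∑ u1, ∑ u2, mU0 qS qU u0 * pC1 qS qU u0 u1 * pC2 qS qU u0 u2 *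
          wgt qS qU s u0 u1 u2 from
        Finset.sum_congr rfl fun _ _ => Finset.sum_congr rfl fun _ _ =>
          Finset.sum_congr rfl fun _ _ => by ring]
      exact sum_rho_wgt qS qU s
    rw [hw]
    rw [rhoPhiBeta_factored qS qU Φ (fun _ _ _ => qS.p s)]
    apply le_of_eq
    have e2 : ∀ u0 u1, ∑ u2, pC2 qS qU u0 u2 * (Φ u0 u1 u2 * qS.p s)
        = (∑ u2, pC2 qS qU u0 u2 * Φ u0 u1 u2) * qS.p s := by
      intro u0 u1
      rw [Finset.sum_mul]
      exact Finset.sum_congr rfl fun _ _ => by ring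
    have e1 : ∀ u0, ∑ u1, pC1 qS qU u0 u1 *
        ((∑ u2, pC2 qS qU u0 u2 * Φ u0 u1 u2) * qS.p s)
        = (∑ u1, pC1 qS qU u0 u1 * ∑ u2, pC2 qS qU u0 u2 * Φ u0 u1 u2) * qS.p s := by
      intro u0
      rw [Finset.sum_mul]
      exact Finset.sum_congr rfl fun _ _ => by ring
    have e0 : ∑ u0, mU0 qS qU u0 *
        ((∑ u1, pC1 qS qU u0 u1 * ∑ u2, pC2 qS qU u0 u2 * Φ u0 u1 u2) * qS.p s)
        = (∑ u0, mU0 qS qU u0 * ∑ u1, pC1 qS qU u0 u1 *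
            ∑ u2, pC2 qS qU u0 u2 * Φ u0 u1 u2) * qS.p s := by
      rw [Finset.sum_mul]
      exact Finset.sum_congr rfl fun _ _ => by ring
    symm
    simp_rw [e2, e1]
    exact e0

end CBLemmas

section SumBeta
open Classical Finset

variable (qS : FinPMF S) (qU : S → FinPMF (U0 × U1 × U2))

/-- the aggregated denominator -/
noncomputable def KF (n0 n1 n2 : ℕ) (s : S) (u0 : U0) (u1 : U1) (u2 : U2) : ℝ :=
  qS.p s * ((2:ℝ) ^ (iSU012 qS qU s u0 u1 u2 + iU1U2cU0 qS qU u0 u1 u2)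
    + ((n2:ℝ) - 1) * (2:ℝ) ^ (iSU01 qS qU s u0 u1)
    + ((n1:ℝ) - 1) * (2:ℝ) ^ (iSU02 qS qU s u0 u2)
    + ((n1:ℝ) - 1) * ((n2:ℝ) - 1) * (2:ℝ) ^ (iSU0 qS qU s u0)
    + ((n0:ℝ) - 1) * ((n1:ℝ) * (n2:ℝ)))

lemma sum_betaF {n0 n1 n2 : ℕ} (h0 : 0 < n0) (h1 : 0 < n1) (h2 : 0 < n2) (s : S)
    (t : Fin n0 × Fin n1 × Fin n2) (u0 : U0) (u1 : U1) (u2 : U2) :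
    ∑ t' : Fin n0 × Fin n1 × Fin n2, betaF qS qU s t t' u0 u1 u2
      = KF qS qU n0 n1 n2 s u0 u1 u2 := by
  haveI : Nonempty (Fin n0) := Fin.pos_iff_nonempty.mp h0
  haveI : Nonempty (Fin n1) := Fin.pos_iff_nonempty.mp h1
  haveI : Nonempty (Fin n2) := Fin.pos_iff_nonempty.mp h2
  rw [Fintype.sum_prod_type]
  simp_rw [Fintype.sum_prod_type]
  have step : ∀ (j' : Fin n0) (l1' : Fin n1),
      ∑ l2' : Fin n2, betaF qS qU s t (j', (l1', l2')) u0 u1 u2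
      = if j' = t.1 then
          (if l1' = t.2.1 then
            (qS.p s * (2:ℝ) ^ (iSU012 qS qU s u0 u1 u2 + iU1U2cU0 qS qU u0 u1 u2)
              + ((n2:ℝ) - 1) * (qS.p s * (2:ℝ) ^ (iSU01 qS qU s u0 u1)))
           else
            (qS.p s * (2:ℝ) ^ (iSU02 qS qU s u0 u2)
              + ((n2:ℝ) - 1) * (qS.p s * (2:ℝ) ^ (iSU0 qS qU s u0))))
        else (n2:ℝ) * qS.p s := by
    intro j' l1'
    unfold betaF
    dsimp only
    by_cases hj : j' = t.1 <;> by_cases hl : l1' = t.2.1 <;>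
      simp [hj, hl, sum_ite_const, Fintype.card_fin, Finset.sum_const, Finset.card_univ,
        nsmul_eq_mul]
  simp_rw [step]
  have step2 : ∀ j' : Fin n0,
      ∑ l1' : Fin n1, (if j' = t.1 then
          (if l1' = t.2.1 then
            (qS.p s * (2:ℝ) ^ (iSU012 qS qU s u0 u1 u2 + iU1U2cU0 qS qU u0 u1 u2)
              + ((n2:ℝ) - 1) * (qS.p s * (2:ℝ) ^ (iSU01 qS qU s u0 u1)))
           else
            (qS.p s * (2:ℝ) ^ (iSU02 qS qU s u0 u2)
              + ((n2:ℝ) - 1) * (qS.p s * (2:ℝ) ^ (iSU0 qS qU s u0))))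
        else (n2:ℝ) * qS.p s)
      = if j' = t.1 then
          ((qS.p s * (2:ℝ) ^ (iSU012 qS qU s u0 u1 u2 + iU1U2cU0 qS qU u0 u1 u2)
              + ((n2:ℝ) - 1) * (qS.p s * (2:ℝ) ^ (iSU01 qS qU s u0 u1)))
            + ((n1:ℝ) - 1) * (qS.p s * (2:ℝ) ^ (iSU02 qS qU s u0 u2)
              + ((n2:ℝ) - 1) * (qS.p s * (2:ℝ) ^ (iSU0 qS qU s u0))))
        else (n1:ℝ) * ((n2:ℝ) * qS.p s) := by
    intro j'
    by_cases hj : j' = t.1 <;>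
      simp [hj, sum_ite_const, Fintype.card_fin, Finset.sum_const, Finset.card_univ,
        nsmul_eq_mul]
  simp_rw [step2]
  rw [sum_ite_const t.1 _ _, KF, Fintype.card_fin]
  ring

end SumBeta

section DiracLemma
open Classical Finset

lemma pNoExcess_dirac (M1 M2 : ℕ) (qS : FinPMF S)
    (d0 : S → R0 → ℝ) (d1 : S → R1 → ℝ) (d2 : S → R2 → ℝ) (D0 D1 D2 : ℝ)
    (enc : S → FinPMF (Fin M1 × Fin M2)) (v0 : Fin M1 × Fin M2 → R0)
    (v1 : Fin M1 → R1) (v2 : Fin M2 → R2) :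
    pNoExcessMD M1 M2 qS d0 d1 d2 D0 D1 D2 enc (fun m => dirac (v0 m))
        (fun m1 => dirac (v1 m1)) (fun m2 => dirac (v2 m2))
      = ∑ s, ∑ m : Fin M1 × Fin M2, qS.p s * (enc s).p m *
          ind (d0 s (v0 m) ≤ D0 ∧ d1 s (v1 m.1) ≤ D1 ∧ d2 s (v2 m.2) ≤ D2) := by
  unfold pNoExcessMD dirac
  refine Finset.sum_congr rfl fun s _ => Finset.sum_congr rfl fun m _ => ?_
  dsimp only
  rw [Finset.sum_eq_single_of_mem (v0 m) (Finset.mem_univ _) (fun b _ hb => by simp [hb])]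
  rw [Finset.sum_eq_single_of_mem (v1 m.1) (Finset.mem_univ _) (fun b _ hb => by simp [hb])]
  rw [Finset.sum_eq_single_of_mem (v2 m.2) (Finset.mem_univ _) (fun b _ hb => by simp [hb])]
  simp

end DiracLemma

section AuxTheorem
open Classical Finset

variable (qS : FinPMF S) (qU : S → FinPMF (U0 × U1 × U2))

noncomputable def WSum {n0 n1 n2 : ℕ} (C : Fin n0 → U0 × (Fin n1 → U1) × (Fin n2 → U2))
    (s : S) : ℝ :=
  ∑ t : Fin n0 × Fin n1 × Fin n2,
    wgt qS qU s (C t.1).1 ((C t.1).2.1 t.2.1) ((C t.1).2.2 t.2.2)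

lemma WSum_nonneg {n0 n1 n2 : ℕ} (C : Fin n0 → U0 × (Fin n1 → U1) × (Fin n2 → U2))
    (s : S) : 0 ≤ WSum qS qU C s :=
  Finset.sum_nonneg fun _ _ => wgt_nonneg qS qU _ _ _ _

noncomputable def eW {n0 n1 n2 : ℕ} (C : Fin n0 → U0 × (Fin n1 → U1) × (Fin n2 → U2))
    (s : S) (t : Fin n0 × Fin n1 × Fin n2) : ℝ :=
  if 0 < WSum qS qU C s then
    wgt qS qU s (C t.1).1 ((C t.1).2.1 t.2.1) ((C t.1).2.2 t.2.2) / WSum qS qU C s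
  else ((n0 * n1 * n2 : ℕ) : ℝ)⁻¹

lemma eW_nonneg {n0 n1 n2 : ℕ} (C : Fin n0 → U0 × (Fin n1 → U1) × (Fin n2 → U2))
    (s : S) (t : Fin n0 × Fin n1 × Fin n2) : 0 ≤ eW qS qU C s t := by
  unfold eW
  split
  · exact div_nonneg (wgt_nonneg qS qU _ _ _ _) (WSum_nonneg qS qU C s)
  · positivity

lemma sum_eW {n0 n1 n2 : ℕ} (hn : n0 * n1 * n2 ≠ 0)
    (C : Fin n0 → U0 × (Fin n1 → U1) × (Fin n2 → U2)) (s : S) :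
    ∑ t : Fin n0 × Fin n1 × Fin n2, eW qS qU C s t = 1 := by
  unfold eW
  by_cases hW : 0 < WSum qS qU C s
  · simp only [hW, if_true]
    rw [← Finset.sum_div]
    have : (∑ t : Fin n0 × Fin n1 × Fin n2,
        wgt qS qU s (C t.1).1 ((C t.1).2.1 t.2.1) ((C t.1).2.2 t.2.2)) = WSum qS qU C s := rfl
    rw [this]
    exact div_self (ne_of_gt hW)
  · simp only [hW, if_false]
    rw [Finset.sum_const, Finset.card_univ]
    simp only [Fintype.card_prod, Fintype.card_fin, nsmul_eq_mul]
    rw [← mul_assoc n0 n1 n2, mul_inv_cancel₀]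
    exact_mod_cast hn

lemma KF_pos {n0 n1 n2 : ℕ} (h0 : 0 < n0) (h1 : 0 < n1) (h2 : 0 < n2)
    (s : S) (u0 : U0) (u1 : U1) (u2 : U2) (hq : 0 < qS.p s) :
    0 < KF qS qU n0 n1 n2 s u0 u1 u2 := by
  have e0 : (1:ℝ) ≤ n0 := by exact_mod_cast h0
  have e1 : (1:ℝ) ≤ n1 := by exact_mod_cast h1
  have e2 : (1:ℝ) ≤ n2 := by exact_mod_cast h2
  have t1 : (0:ℝ) < (2:ℝ) ^ (iSU012 qS qU s u0 u1 u2 + iU1U2cU0 qS qU u0 u1 u2) :=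
    Real.rpow_pos_of_pos (by norm_num) _
  have t2 : (0:ℝ) ≤ ((n2:ℝ) - 1) * (2:ℝ) ^ (iSU01 qS qU s u0 u1) :=
    mul_nonneg (by linarith) (Real.rpow_pos_of_pos (by norm_num) _).le
  have t3 : (0:ℝ) ≤ ((n1:ℝ) - 1) * (2:ℝ) ^ (iSU02 qS qU s u0 u2) :=
    mul_nonneg (by linarith) (Real.rpow_pos_of_pos (by norm_num) _).le
  have t4 : (0:ℝ) ≤ ((n1:ℝ) - 1) * ((n2:ℝ) - 1) * (2:ℝ) ^ (iSU0 qS qU s u0) :=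
    mul_nonneg (mul_nonneg (by linarith) (by linarith))
      (Real.rpow_pos_of_pos (by norm_num) _).le
  have t5 : (0:ℝ) ≤ ((n0:ℝ) - 1) * ((n1:ℝ) * (n2:ℝ)) :=
    mul_nonneg (by linarith) (by positivity)
  unfold KF
  apply mul_pos hq
  linarith

lemma wgt_pos_qMD_pos (s : S) (u0 : U0) (u1 : U1) (u2 : U2)
    (hw : 0 < wgt qS qU s u0 u1 u2) : 0 < qMD qS qU s u0 u1 u2 := by
  rcases eq_or_lt_of_le (qMD_nonneg qS qU s u0 u1 u2) with h | h
  · rw [wgt, ← h, zero_mul, zero_div] at hw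
    exact absurd hw (lt_irrefl 0)
  · exact h

theorem exists_good_codebook [Nonempty U1] [Nonempty U2] {n0 n1 n2 : ℕ}
    (h0 : 0 < n0) (h1 : 0 < n1) (h2 : 0 < n2)
    (G : S → U0 → U1 → U2 → ℝ) (hG : ∀ s u0 u1 u2, 0 ≤ G s u0 u1 u2) :
    ∃ C : Fin n0 → U0 × (Fin n1 → U1) × (Fin n2 → U2),
      (∑ s, ∑ t : Fin n0 × Fin n1 × Fin n2, qS.p s * eW qS qU C s t *
          G s (C t.1).1 ((C t.1).2.1 t.2.1) ((C t.1).2.2 t.2.2))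
        ≥ ∑ s, ((n0 * n1 * n2 : ℕ) : ℝ) * ∑ u0, ∑ u1, ∑ u2,
            qS.p s * (qMD qS qU s u0 u1 u2 * G s u0 u1 u2 /
              KF qS qU n0 n1 n2 s u0 u1 u2) := by
  classical
  set RHS := ∑ s, ((n0 * n1 * n2 : ℕ) : ℝ) * ∑ u0, ∑ u1, ∑ u2,
    qS.p s * (qMD qS qU s u0 u1 u2 * G s u0 u1 u2 /
      KF qS qU n0 n1 n2 s u0 u1 u2) with hRHS
  -- the pointwise lower bound on the encoder performance
  have point : ∀ (C : Fin n0 → U0 × (Fin n1 → U1) × (Fin n2 → U2)) (s : S)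
      (t : Fin n0 × Fin n1 × Fin n2),
      qS.p s * eW qS qU C s t *
          G s (C t.1).1 ((C t.1).2.1 t.2.1) ((C t.1).2.2 t.2.2)
        ≥ qS.p s * wgt qS qU s (C t.1).1 ((C t.1).2.1 t.2.1) ((C t.1).2.2 t.2.2) *
            G s (C t.1).1 ((C t.1).2.1 t.2.1) ((C t.1).2.2 t.2.2) *
            (2 / KF qS qU n0 n1 n2 s (C t.1).1 ((C t.1).2.1 t.2.1) ((C t.1).2.2 t.2.2)
              - WSum qS qU C s /
                (KF qS qU n0 n1 n2 s (C t.1).1 ((C t.1).2.1 t.2.1) ((C t.1).2.2 t.2.2))^2) := by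
    intro C s t
    set u0 := (C t.1).1
    set v1 := (C t.1).2.1 t.2.1
    set v2 := (C t.1).2.2 t.2.2
    by_cases hW : 0 < WSum qS qU C s
    · rcases eq_or_lt_of_le (wgt_nonneg qS qU s u0 v1 v2) with hw | hw
      · rw [eW, if_pos hW, ← hw]
        simp
      · have hqMD := wgt_pos_qMD_pos qS qU s u0 v1 v2 hw
        have hq := (md_pos qS qU s u0 v1 v2 hqMD).1
        have hK := KF_pos qS qU h0 h1 h2 s u0 v1 v2 hq
        rw [eW, if_pos hW]
        have ht := tangent_ineq (WSum qS qU C s) (KF qS qU n0 n1 n2 s u0 v1 v2) hW hK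
        calc qS.p s * wgt qS qU s u0 v1 v2 * G s u0 v1 v2 *
              (2 / KF qS qU n0 n1 n2 s u0 v1 v2
                - WSum qS qU C s / (KF qS qU n0 n1 n2 s u0 v1 v2)^2)
            ≤ qS.p s * wgt qS qU s u0 v1 v2 * G s u0 v1 v2 * (1 / WSum qS qU C s) :=
              mul_le_mul_of_nonneg_left ht
                (mul_nonneg (mul_nonneg (qS.nonneg s) (wgt_nonneg qS qU s u0 v1 v2))
                  (hG s u0 v1 v2))
          _ = qS.p s * (wgt qS qU s u0 v1 v2 / WSum qS qU C s) * G s u0 v1 v2 := by ring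
    · have hW0 : WSum qS qU C s = 0 := le_antisymm (not_lt.mp hW) (WSum_nonneg qS qU C s)
      have hw0 : wgt qS qU s u0 v1 v2 = 0 := by
        have := (Finset.sum_eq_zero_iff_of_nonneg
          (fun t' _ => wgt_nonneg qS qU s (C t'.1).1 ((C t'.1).2.1 t'.2.1)
            ((C t'.1).2.2 t'.2.2))).mp hW0 t (Finset.mem_univ t)
        exact this
      rw [hw0]
      have : qS.p s * 0 * G s u0 v1 v2 * (2 / KF qS qU n0 n1 n2 s u0 v1 v2
          - WSum qS qU C s / (KF qS qU n0 n1 n2 s u0 v1 v2)^2) = 0 := by ring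
      rw [this]
      exact mul_nonneg (mul_nonneg (qS.nonneg s) (eW_nonneg qS qU C s t)) (hG s u0 v1 v2)
  -- expectation of the lower bound
  have expect : ∑ C : Fin n0 → U0 × (Fin n1 → U1) × (Fin n2 → U2),
      (∏ j, nuB qS qU (C j)) *
        (∑ s, ∑ t : Fin n0 × Fin n1 × Fin n2,
          qS.p s * wgt qS qU s (C t.1).1 ((C t.1).2.1 t.2.1) ((C t.1).2.2 t.2.2) *
            G s (C t.1).1 ((C t.1).2.1 t.2.1) ((C t.1).2.2 t.2.2) *
            (2 / KF qS qU n0 n1 n2 s (C t.1).1 ((C t.1).2.1 t.2.1) ((C t.1).2.2 t.2.2)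
              - WSum qS qU C s /
                (KF qS qU n0 n1 n2 s (C t.1).1 ((C t.1).2.1 t.2.1) ((C t.1).2.2 t.2.2))^2))
      ≥ RHS := by
    -- push the expectation inside
    have swapLHS : (∑ C : Fin n0 → U0 × (Fin n1 → U1) × (Fin n2 → U2),
        (∏ j, nuB qS qU (C j)) *
          (∑ s, ∑ t : Fin n0 × Fin n1 × Fin n2,
            qS.p s * wgt qS qU s (C t.1).1 ((C t.1).2.1 t.2.1) ((C t.1).2.2 t.2.2) *
              G s (C t.1).1 ((C t.1).2.1 t.2.1) ((C t.1).2.2 t.2.2) *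
              (2 / KF qS qU n0 n1 n2 s (C t.1).1 ((C t.1).2.1 t.2.1) ((C t.1).2.2 t.2.2)
                - WSum qS qU C s /
                  (KF qS qU n0 n1 n2 s (C t.1).1 ((C t.1).2.1 t.2.1)
                    ((C t.1).2.2 t.2.2))^2)))
        = ∑ s, ∑ t : Fin n0 × Fin n1 × Fin n2,
            ∑ C : Fin n0 → U0 × (Fin n1 → U1) × (Fin n2 → U2),
            (∏ j, nuB qS qU (C j)) *
              (qS.p s * wgt qS qU s (C t.1).1 ((C t.1).2.1 t.2.1) ((C t.1).2.2 t.2.2) *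
                G s (C t.1).1 ((C t.1).2.1 t.2.1) ((C t.1).2.2 t.2.2) *
                (2 / KF qS qU n0 n1 n2 s (C t.1).1 ((C t.1).2.1 t.2.1) ((C t.1).2.2 t.2.2)
                  - WSum qS qU C s /
                    (KF qS qU n0 n1 n2 s (C t.1).1 ((C t.1).2.1 t.2.1)
                      ((C t.1).2.2 t.2.2))^2)) := by
      simp_rw [Finset.mul_sum]
      rw [Finset.sum_comm]
      exact Finset.sum_congr rfl fun s _ => Finset.sum_comm
    rw [swapLHS, hRHS]
    apply Finset.sum_le_sum
    intro s _
    -- per (s,t) bound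
    have per_t : ∀ t : Fin n0 × Fin n1 × Fin n2,
        (∑ C : Fin n0 → U0 × (Fin n1 → U1) × (Fin n2 → U2),
          (∏ j, nuB qS qU (C j)) *
            (qS.p s * wgt qS qU s (C t.1).1 ((C t.1).2.1 t.2.1) ((C t.1).2.2 t.2.2) *
              G s (C t.1).1 ((C t.1).2.1 t.2.1) ((C t.1).2.2 t.2.2) *
              (2 / KF qS qU n0 n1 n2 s (C t.1).1 ((C t.1).2.1 t.2.1) ((C t.1).2.2 t.2.2)
                - WSum qS qU C s /
                  (KF qS qU n0 n1 n2 s (C t.1).1 ((C t.1).2.1 t.2.1)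
                    ((C t.1).2.2 t.2.2))^2)))
        ≥ ∑ u0, ∑ u1, ∑ u2, qS.p s * (qMD qS qU s u0 u1 u2 * G s u0 u1 u2 /
            KF qS qU n0 n1 n2 s u0 u1 u2) := by
      intro t
      -- split into the two expectation terms
      have expand : ∀ C : Fin n0 → U0 × (Fin n1 → U1) × (Fin n2 → U2),
          (∏ j, nuB qS qU (C j)) *
            (qS.p s * wgt qS qU s (C t.1).1 ((C t.1).2.1 t.2.1) ((C t.1).2.2 t.2.2) *
              G s (C t.1).1 ((C t.1).2.1 t.2.1) ((C t.1).2.2 t.2.2) *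
              (2 / KF qS qU n0 n1 n2 s (C t.1).1 ((C t.1).2.1 t.2.1) ((C t.1).2.2 t.2.2)
                - WSum qS qU C s /
                  (KF qS qU n0 n1 n2 s (C t.1).1 ((C t.1).2.1 t.2.1)
                    ((C t.1).2.2 t.2.2))^2))
          = 2 * ((∏ j, nuB qS qU (C j)) *
              (qS.p s * wgt qS qU s (C t.1).1 ((C t.1).2.1 t.2.1) ((C t.1).2.2 t.2.2) *
                G s (C t.1).1 ((C t.1).2.1 t.2.1) ((C t.1).2.2 t.2.2) /
                KF qS qU n0 n1 n2 s (C t.1).1 ((C t.1).2.1 t.2.1) ((C t.1).2.2 t.2.2)))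
            - (∏ j, nuB qS qU (C j)) *
              ((qS.p s * wgt qS qU s (C t.1).1 ((C t.1).2.1 t.2.1) ((C t.1).2.2 t.2.2) *
                G s (C t.1).1 ((C t.1).2.1 t.2.1) ((C t.1).2.2 t.2.2) /
                (KF qS qU n0 n1 n2 s (C t.1).1 ((C t.1).2.1 t.2.1) ((C t.1).2.2 t.2.2))^2) *
                WSum qS qU C s) := by
        intro C; ring
      simp_rw [expand]
      rw [Finset.sum_sub_distrib, ← Finset.mul_sum]
      -- first expectation, exact
      rw [cb_one qS qU t (fun u0 u1 u2 => qS.p s * wgt qS qU s u0 u1 u2 * G s u0 u1 u2 /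
        KF qS qU n0 n1 n2 s u0 u1 u2)]
      -- second expectation, bounded via cross_bound
      have hF3 : ∀ u0 u1 u2, 0 ≤ qS.p s * wgt qS qU s u0 u1 u2 * G s u0 u1 u2 /
          (KF qS qU n0 n1 n2 s u0 u1 u2)^2 :=
        fun u0 u1 u2 => div_nonneg
          (mul_nonneg (mul_nonneg (qS.nonneg s) (wgt_nonneg qS qU s u0 u1 u2))
            (hG s u0 u1 u2)) (sq_nonneg _)
      have hsecond : (∑ C : Fin n0 → U0 × (Fin n1 → U1) × (Fin n2 → U2),
          (∏ j, nuB qS qU (C j)) *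
            ((qS.p s * wgt qS qU s (C t.1).1 ((C t.1).2.1 t.2.1) ((C t.1).2.2 t.2.2) *
              G s (C t.1).1 ((C t.1).2.1 t.2.1) ((C t.1).2.2 t.2.2) /
              (KF qS qU n0 n1 n2 s (C t.1).1 ((C t.1).2.1 t.2.1) ((C t.1).2.2 t.2.2))^2) *
              WSum qS qU C s))
          ≤ ∑ u0, ∑ u1, ∑ u2,
            (mU0 qS qU u0 * (pC1 qS qU u0 u1 * pC2 qS qU u0 u2)) *
              (qS.p s * wgt qS qU s u0 u1 u2 * G s u0 u1 u2 /
                (KF qS qU n0 n1 n2 s u0 u1 u2)^2) *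
              KF qS qU n0 n1 n2 s u0 u1 u2 := by
        unfold WSum
        simp_rw [Finset.mul_sum]
        rw [Finset.sum_comm]
        calc ∑ t' : Fin n0 × Fin n1 × Fin n2,
              ∑ C : Fin n0 → U0 × (Fin n1 → U1) × (Fin n2 → U2),
              (∏ j, nuB qS qU (C j)) *
                ((qS.p s * wgt qS qU s (C t.1).1 ((C t.1).2.1 t.2.1) ((C t.1).2.2 t.2.2) *
                  G s (C t.1).1 ((C t.1).2.1 t.2.1) ((C t.1).2.2 t.2.2) /
                  (KF qS qU n0 n1 n2 s (C t.1).1 ((C t.1).2.1 t.2.1)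
                    ((C t.1).2.2 t.2.2))^2) *
                  wgt qS qU s (C t'.1).1 ((C t'.1).2.1 t'.2.1) ((C t'.1).2.2 t'.2.2))
            ≤ ∑ t' : Fin n0 × Fin n1 × Fin n2, ∑ u0, ∑ u1, ∑ u2,
              (mU0 qS qU u0 * (pC1 qS qU u0 u1 * pC2 qS qU u0 u2)) *
                (qS.p s * wgt qS qU s u0 u1 u2 * G s u0 u1 u2 /
                  (KF qS qU n0 n1 n2 s u0 u1 u2)^2) *
                betaF qS qU s t t' u0 u1 u2 := by
              apply Finset.sum_le_sum
              intro t' _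
              exact cross_bound qS qU s
                (fun u0 u1 u2 => qS.p s * wgt qS qU s u0 u1 u2 * G s u0 u1 u2 /
                  (KF qS qU n0 n1 n2 s u0 u1 u2)^2) hF3 t t'
          _ = ∑ u0, ∑ u1, ∑ u2,
              (mU0 qS qU u0 * (pC1 qS qU u0 u1 * pC2 qS qU u0 u2)) *
                (qS.p s * wgt qS qU s u0 u1 u2 * G s u0 u1 u2 /
                  (KF qS qU n0 n1 n2 s u0 u1 u2)^2) *
                KF qS qU n0 n1 n2 s u0 u1 u2 := by
              rw [Finset.sum_comm]
              apply Finset.sum_congr rfl; intro u0 _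
              rw [Finset.sum_comm]
              apply Finset.sum_congr rfl; intro u1 _
              rw [Finset.sum_comm]
              apply Finset.sum_congr rfl; intro u2 _
              rw [← Finset.mul_sum, sum_betaF qS qU h0 h1 h2 s t u0 u1 u2]
      have final : 2 * (∑ u0, ∑ u1, ∑ u2,
            (mU0 qS qU u0 * (pC1 qS qU u0 u1 * pC2 qS qU u0 u2)) *
              (qS.p s * wgt qS qU s u0 u1 u2 * G s u0 u1 u2 /
                KF qS qU n0 n1 n2 s u0 u1 u2))
          - (∑ u0, ∑ u1, ∑ u2,
            (mU0 qS qU u0 * (pC1 qS qU u0 u1 * pC2 qS qU u0 u2)) *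
              (qS.p s * wgt qS qU s u0 u1 u2 * G s u0 u1 u2 /
                (KF qS qU n0 n1 n2 s u0 u1 u2)^2) *
              KF qS qU n0 n1 n2 s u0 u1 u2)
          = ∑ u0, ∑ u1, ∑ u2, qS.p s * (qMD qS qU s u0 u1 u2 * G s u0 u1 u2 /
              KF qS qU n0 n1 n2 s u0 u1 u2) := by
        rw [Finset.mul_sum, ← Finset.sum_sub_distrib]
        apply Finset.sum_congr rfl; intro u0 _
        rw [Finset.mul_sum, ← Finset.sum_sub_distrib]
        apply Finset.sum_congr rfl; intro u1 _
        rw [Finset.mul_sum, ← Finset.sum_sub_distrib]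
        apply Finset.sum_congr rfl; intro u2 _
        by_cases hq : qS.p s = 0
        · have hqMD := qMD_eq_zero_of_qSp qS qU s u0 u1 u2 hq
          rw [hq, hqMD]
          ring
        · have hqpos : 0 < qS.p s := lt_of_le_of_ne (qS.nonneg s) (Ne.symm hq)
          have hK := KF_pos qS qU h0 h1 h2 s u0 u1 u2 hqpos
          have hrw : mU0 qS qU u0 * (pC1 qS qU u0 u1 * pC2 qS qU u0 u2) *
              wgt qS qU s u0 u1 u2 = qMD qS qU s u0 u1 u2 := by
            rw [← rho_mul_wgt qS qU s u0 u1 u2]; ring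
          rw [← hrw]
          field_simp
          ring
      linarith [hsecond]
    calc (∑ t : Fin n0 × Fin n1 × Fin n2,
          ∑ C : Fin n0 → U0 × (Fin n1 → U1) × (Fin n2 → U2),
          (∏ j, nuB qS qU (C j)) *
            (qS.p s * wgt qS qU s (C t.1).1 ((C t.1).2.1 t.2.1) ((C t.1).2.2 t.2.2) *
              G s (C t.1).1 ((C t.1).2.1 t.2.1) ((C t.1).2.2 t.2.2) *
              (2 / KF qS qU n0 n1 n2 s (C t.1).1 ((C t.1).2.1 t.2.1) ((C t.1).2.2 t.2.2)
                - WSum qS qU C s /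
                  (KF qS qU n0 n1 n2 s (C t.1).1 ((C t.1).2.1 t.2.1)
                    ((C t.1).2.2 t.2.2))^2)))
        ≥ ∑ t : Fin n0 × Fin n1 × Fin n2,
            ∑ u0, ∑ u1, ∑ u2, qS.p s * (qMD qS qU s u0 u1 u2 * G s u0 u1 u2 /
              KF qS qU n0 n1 n2 s u0 u1 u2) := Finset.sum_le_sum fun t _ => per_t t
      _ = ((n0 * n1 * n2 : ℕ) : ℝ) * ∑ u0, ∑ u1, ∑ u2,
            qS.p s * (qMD qS qU s u0 u1 u2 * G s u0 u1 u2 /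
              KF qS qU n0 n1 n2 s u0 u1 u2) := by
          rw [Finset.sum_const, Finset.card_univ]
          simp only [Fintype.card_prod, Fintype.card_fin, nsmul_eq_mul]
          push_cast
          ring
  -- averaging argument
  by_contra hcon
  push_neg at hcon
  have hmu_nonneg : ∀ C : Fin n0 → U0 × (Fin n1 → U1) × (Fin n2 → U2),
      0 ≤ ∏ j, nuB qS qU (C j) :=
    fun C => Finset.prod_nonneg fun j _ => nuB_nonneg qS qU (C j)
  have hEP : ∑ C : Fin n0 → U0 × (Fin n1 → U1) × (Fin n2 → U2),
      (∏ j, nuB qS qU (C j)) *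
        (∑ s, ∑ t : Fin n0 × Fin n1 × Fin n2, qS.p s * eW qS qU C s t *
          G s (C t.1).1 ((C t.1).2.1 t.2.1) ((C t.1).2.2 t.2.2))
      ≥ RHS := by
    refine le_trans expect (Finset.sum_le_sum fun C _ => ?_)
    apply mul_le_mul_of_nonneg_left _ (hmu_nonneg C)
    apply Finset.sum_le_sum; intro s _
    apply Finset.sum_le_sum; intro t _
    exact point C s t
  have hlt : ∑ C : Fin n0 → U0 × (Fin n1 → U1) × (Fin n2 → U2),
      (∏ j, nuB qS qU (C j)) *
        (∑ s, ∑ t : Fin n0 × Fin n1 × Fin n2, qS.p s * eW qS qU C s t *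
          G s (C t.1).1 ((C t.1).2.1 t.2.1) ((C t.1).2.2 t.2.2))
      < RHS := by
    have hone := sum_mu_one qS qU (n0 := n0) (n1 := n1) (n2 := n2)
    obtain ⟨C0, -, hC0⟩ := Finset.exists_ne_zero_of_sum_ne_zero
      (by rw [hone]; norm_num :
        (∑ C : Fin n0 → U0 × (Fin n1 → U1) × (Fin n2 → U2), ∏ j, nuB qS qU (C j)) ≠ 0)
    have hC0pos : 0 < ∏ j, nuB qS qU (C0 j) :=
      lt_of_le_of_ne (hmu_nonneg C0) (Ne.symm hC0)
    calc ∑ C : Fin n0 → U0 × (Fin n1 → U1) × (Fin n2 → U2),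
          (∏ j, nuB qS qU (C j)) *
            (∑ s, ∑ t : Fin n0 × Fin n1 × Fin n2, qS.p s * eW qS qU C s t *
              G s (C t.1).1 ((C t.1).2.1 t.2.1) ((C t.1).2.2 t.2.2))
        < ∑ C : Fin n0 → U0 × (Fin n1 → U1) × (Fin n2 → U2),
            (∏ j, nuB qS qU (C j)) * RHS := by
          apply Finset.sum_lt_sum
          · intro C _
            exact mul_le_mul_of_nonneg_left (le_of_lt (hcon C)) (hmu_nonneg C)
          · exact ⟨C0, Finset.mem_univ C0,
              (mul_lt_mul_iff_right₀ hC0pos).mpr (hcon C0)⟩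
      _ = RHS := by rw [← Finset.sum_mul, hone, one_mul]
  exact absurd hEP (not_le.mpr hlt)

end AuxTheorem

set_option maxHeartbeats 1000000 in
open Classical Finset in
/-- One-shot multiple description achievability (Zhang–Berger form), where `J₀` is a
common divisor of `M₁` and `M₂`. -/
theorem oneShot_multiple_description (qS : FinPMF S)
    (qU : S → FinPMF (U0 × U1 × U2))
    (d0 : S → R0 → ℝ) (d1 : S → R1 → ℝ) (d2 : S → R2 → ℝ)
    (hd0 : ∀ s r, 0 ≤ d0 s r) (hd1 : ∀ s r, 0 ≤ d1 s r) (hd2 : ∀ s r, 0 ≤ d2 s r)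
    (D0 D1 D2 : ℝ) (hD0 : 0 ≤ D0) (hD1 : 0 ≤ D1) (hD2 : 0 ≤ D2)
    (g0 : U0 → U1 → U2 → R0) (g1 : U0 → U1 → R1) (g2 : U0 → U2 → R2)
    (M1 M2 J0 : ℕ) (hM1 : 0 < M1) (hM2 : 0 < M2) (hJ0 : 0 < J0)
    (hJ01 : J0 ∣ M1) (hJ02 : J0 ∣ M2) :
    ∃ (enc : S → FinPMF (Fin M1 × Fin M2)) (dec0 : Fin M1 × Fin M2 → FinPMF R0)
      (dec1 : Fin M1 → FinPMF R1) (dec2 : Fin M2 → FinPMF R2),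
      pNoExcessMD M1 M2 qS d0 d1 d2 D0 D1 D2 enc dec0 dec1 dec2 ≥
        ∑ s : S, ∑ u0 : U0, ∑ u1 : U1, ∑ u2 : U2,
          qMD qS qU s u0 u1 u2 *
          ind (d0 s (g0 u0 u1 u2) ≤ D0 ∧ d1 s (g1 u0 u1) ≤ D1 ∧ d2 s (g2 u0 u2) ≤ D2) *
          (1 + (J0 : ℝ)⁻¹ * (2 : ℝ) ^ (iSU0 qS qU s u0)
             + (M1 : ℝ)⁻¹ * (2 : ℝ) ^ (iSU01 qS qU s u0 u1)
             + (M2 : ℝ)⁻¹ * (2 : ℝ) ^ (iSU02 qS qU s u0 u2)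
             + (J0 : ℝ) * ((M1 : ℝ) * (M2 : ℝ))⁻¹ *
                 (2 : ℝ) ^ (iSU012 qS qU s u0 u1 u2 + iU1U2cU0 qS qU u0 u1 u2))⁻¹ := by
  classical
  -- nonemptiness
  have hS : Nonempty S := by
    by_contra h
    rw [not_nonempty_iff] at h
    have h1 := qS.sum_eq_one
    rw [Finset.univ_eq_empty, Finset.sum_empty] at h1
    norm_num at h1
  obtain ⟨s0⟩ := hS
  have hU : Nonempty (U0 × U1 × U2) := by
    by_contra h
    rw [not_nonempty_iff] at h
    have h1 := (qU s0).sum_eq_one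
    rw [Finset.univ_eq_empty, Finset.sum_empty] at h1
    norm_num at h1
  haveI : Nonempty U0 := ⟨hU.some.1⟩
  haveI : Nonempty U1 := ⟨hU.some.2.1⟩
  haveI : Nonempty U2 := ⟨hU.some.2.2⟩
  -- split the message sets
  obtain ⟨L1, hL1⟩ := hJ01
  obtain ⟨L2, hL2⟩ := hJ02
  have hL1pos : 0 < L1 := by
    rcases Nat.eq_zero_or_pos L1 with h | h
    · subst h; rw [Nat.mul_zero] at hL1; omega
    · exact h
  have hL2pos : 0 < L2 := by
    rcases Nat.eq_zero_or_pos L2 with h | h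
    · subst h; rw [Nat.mul_zero] at hL2; omega
    · exact h
  have hM1r : (M1 : ℝ) = (J0 : ℝ) * (L1 : ℝ) := by rw [hL1]; push_cast; ring
  have hM2r : (M2 : ℝ) = (J0 : ℝ) * (L2 : ℝ) := by rw [hL2]; push_cast; ring
  have hJ1 : (1:ℝ) ≤ (J0:ℝ) := by exact_mod_cast hJ0
  have hL1' : (1:ℝ) ≤ (L1:ℝ) := by exact_mod_cast hL1pos
  have hL2' : (1:ℝ) ≤ (L2:ℝ) := by exact_mod_cast hL2pos
  -- message index equivalences
  let e1 : Fin M1 ≃ Fin J0 × Fin L1 := Fintype.equivOfCardEq (by simp [hL1])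
  let e2 : Fin M2 ≃ Fin J0 × Fin L2 := Fintype.equivOfCardEq (by simp [hL2])
  let ep : (Fin J0 × Fin L1) × (Fin J0 × Fin L2) ≃ Fin M1 × Fin M2 :=
    Equiv.prodCongr e1.symm e2.symm
  have ep_def : ∀ p : (Fin J0 × Fin L1) × (Fin J0 × Fin L2),
      ep p = (e1.symm p.1, e2.symm p.2) := fun p => rfl
  -- get a good codebook
  obtain ⟨C, hC⟩ := exists_good_codebook qS qU hJ0 hL1pos hL2pos
    (fun s u0 u1 u2 => ind (d0 s (g0 u0 u1 u2) ≤ D0 ∧ d1 s (g1 u0 u1) ≤ D1 ∧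
      d2 s (g2 u0 u2) ≤ D2))
    (fun s u0 u1 u2 => ind_nonneg _)
  -- collapsing the diagonal
  have collapse : ∀ (H : Fin J0 → Fin L1 → Fin J0 → Fin L2 → ℝ),
      (∑ p : (Fin J0 × Fin L1) × (Fin J0 × Fin L2),
        if p.1.1 = p.2.1 then H p.1.1 p.1.2 p.2.1 p.2.2 else 0)
      = ∑ j, ∑ l1, ∑ l2, H j l1 j l2 := by
    intro H
    rw [Fintype.sum_prod_type]
    simp_rw [Fintype.sum_prod_type]
    apply Finset.sum_congr rfl; intro j _
    apply Finset.sum_congr rfl; intro l1 _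
    rw [Finset.sum_comm]
    apply Finset.sum_congr rfl; intro l2 _
    simp [Finset.sum_ite_eq]
  have hJLL : J0 * L1 * L2 ≠ 0 := by positivity
  -- the encoder pmf
  have enc_nonneg : ∀ (s : S) (m : Fin M1 × Fin M2),
      0 ≤ (if (e1 m.1).1 = (e2 m.2).1 then
        eW qS qU C s ((e1 m.1).1, (e1 m.1).2, (e2 m.2).2) else 0) := by
    intro s m
    split
    · exact eW_nonneg qS qU C s _
    · exact le_rfl
  have enc_sum : ∀ s : S, ∑ m : Fin M1 × Fin M2,
      (if (e1 m.1).1 = (e2 m.2).1 then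
        eW qS qU C s ((e1 m.1).1, (e1 m.1).2, (e2 m.2).2) else 0) = 1 := by
    intro s
    rw [← Equiv.sum_comp ep (fun m : Fin M1 × Fin M2 =>
      if (e1 m.1).1 = (e2 m.2).1 then
        eW qS qU C s ((e1 m.1).1, (e1 m.1).2, (e2 m.2).2) else 0)]
    simp only [ep_def, Equiv.apply_symm_apply]
    rw [collapse (fun j l1 _ l2 => eW qS qU C s (j, l1, l2))]
    have h := sum_eW qS qU hJLL C s
    rw [Fintype.sum_prod_type] at h
    simp_rw [Fintype.sum_prod_type] at h
    exact h
  refine ⟨fun s => ⟨fun m => if (e1 m.1).1 = (e2 m.2).1 then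
      eW qS qU C s ((e1 m.1).1, (e1 m.1).2, (e2 m.2).2) else 0,
      enc_nonneg s, enc_sum s⟩,
    fun m => dirac (g0 (C (e1 m.1).1).1 ((C (e1 m.1).1).2.1 (e1 m.1).2)
      ((C (e2 m.2).1).2.2 (e2 m.2).2)),
    fun m1 => dirac (g1 (C (e1 m1).1).1 ((C (e1 m1).1).2.1 (e1 m1).2)),
    fun m2 => dirac (g2 (C (e2 m2).1).1 ((C (e2 m2).1).2.2 (e2 m2).2)), ?_⟩
  rw [pNoExcess_dirac]
  -- compute the success probability of this code
  have hPP : (∑ s, ∑ m : Fin M1 × Fin M2, qS.p s *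
      (if (e1 m.1).1 = (e2 m.2).1 then
        eW qS qU C s ((e1 m.1).1, (e1 m.1).2, (e2 m.2).2) else 0) *
      ind (d0 s (g0 (C (e1 m.1).1).1 ((C (e1 m.1).1).2.1 (e1 m.1).2)
          ((C (e2 m.2).1).2.2 (e2 m.2).2)) ≤ D0 ∧
        d1 s (g1 (C (e1 m.1).1).1 ((C (e1 m.1).1).2.1 (e1 m.1).2)) ≤ D1 ∧
        d2 s (g2 (C (e2 m.2).1).1 ((C (e2 m.2).1).2.2 (e2 m.2).2)) ≤ D2))
      = ∑ s, ∑ t : Fin J0 × Fin L1 × Fin L2, qS.p s * eW qS qU C s t *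
          ind (d0 s (g0 (C t.1).1 ((C t.1).2.1 t.2.1) ((C t.1).2.2 t.2.2)) ≤ D0 ∧
            d1 s (g1 (C t.1).1 ((C t.1).2.1 t.2.1)) ≤ D1 ∧
            d2 s (g2 (C t.1).1 ((C t.1).2.2 t.2.2)) ≤ D2) := by
    apply Finset.sum_congr rfl; intro s _
    rw [← Equiv.sum_comp ep (fun m : Fin M1 × Fin M2 => qS.p s *
      (if (e1 m.1).1 = (e2 m.2).1 then
        eW qS qU C s ((e1 m.1).1, (e1 m.1).2, (e2 m.2).2) else 0) *
      ind (d0 s (g0 (C (e1 m.1).1).1 ((C (e1 m.1).1).2.1 (e1 m.1).2)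
          ((C (e2 m.2).1).2.2 (e2 m.2).2)) ≤ D0 ∧
        d1 s (g1 (C (e1 m.1).1).1 ((C (e1 m.1).1).2.1 (e1 m.1).2)) ≤ D1 ∧
        d2 s (g2 (C (e2 m.2).1).1 ((C (e2 m.2).1).2.2 (e2 m.2).2)) ≤ D2))]
    simp only [ep_def, Equiv.apply_symm_apply]
    simp only [mul_ite, ite_mul, mul_zero, zero_mul]
    rw [collapse (fun j l1 j' l2 => qS.p s * eW qS qU C s (j, l1, l2) *
      ind (d0 s (g0 (C j).1 ((C j).2.1 l1) ((C j').2.2 l2)) ≤ D0 ∧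
        d1 s (g1 (C j).1 ((C j).2.1 l1)) ≤ D1 ∧
        d2 s (g2 (C j').1 ((C j').2.2 l2)) ≤ D2))]
    rw [Fintype.sum_prod_type]
    simp_rw [Fintype.sum_prod_type]
  rw [hPP]
  -- compare the target with the codebook bound
  refine le_trans ?_ hC
  apply Finset.sum_le_sum
  intro s _
  rw [Finset.mul_sum]
  apply Finset.sum_le_sum
  intro u0 _
  rw [Finset.mul_sum]
  apply Finset.sum_le_sum
  intro u1 _
  rw [Finset.mul_sum]
  apply Finset.sum_le_sum
  intro u2 _
  clear hPP collapse enc_nonneg enc_sum ep_def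
  -- per-term comparison
  by_cases hq : qS.p s = 0
  · have hqMD := qMD_eq_zero_of_qSp qS qU s u0 u1 u2 hq
    rw [hqMD, hq]
    simp
  · have hqpos : 0 < qS.p s := lt_of_le_of_ne (qS.nonneg s) (Ne.symm hq)
    set x0 := (2:ℝ) ^ (iSU0 qS qU s u0) with hx0
    set x01 := (2:ℝ) ^ (iSU01 qS qU s u0 u1) with hx01
    set x02 := (2:ℝ) ^ (iSU02 qS qU s u0 u2) with hx02
    set x5 := (2:ℝ) ^ (iSU012 qS qU s u0 u1 u2 + iU1U2cU0 qS qU u0 u1 u2) with hx5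
    have hx0p : 0 < x0 := Real.rpow_pos_of_pos (by norm_num) _
    have hx01p : 0 < x01 := Real.rpow_pos_of_pos (by norm_num) _
    have hx02p : 0 < x02 := Real.rpow_pos_of_pos (by norm_num) _
    have hx5p : 0 < x5 := Real.rpow_pos_of_pos (by norm_num) _
    have hbrpos : (0:ℝ) < x5 + ((L2:ℝ) - 1) * x01 + ((L1:ℝ) - 1) * x02 +
        ((L1:ℝ) - 1) * ((L2:ℝ) - 1) * x0 + ((J0:ℝ) - 1) * ((L1:ℝ) * (L2:ℝ)) := by
      have h2 : 0 ≤ ((L2:ℝ) - 1) * x01 := mul_nonneg (by linarith) hx01p.le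
      have h3 : 0 ≤ ((L1:ℝ) - 1) * x02 := mul_nonneg (by linarith) hx02p.le
      have h4 : 0 ≤ ((L1:ℝ) - 1) * ((L2:ℝ) - 1) * x0 :=
        mul_nonneg (mul_nonneg (by linarith) (by linarith)) hx0p.le
      have h5 : 0 ≤ ((J0:ℝ) - 1) * ((L1:ℝ) * (L2:ℝ)) :=
        mul_nonneg (by linarith) (by positivity)
      linarith
    have hKval : KF qS qU J0 L1 L2 s u0 u1 u2 = qS.p s *
        (x5 + ((L2:ℝ) - 1) * x01 + ((L1:ℝ) - 1) * x02 +
          ((L1:ℝ) - 1) * ((L2:ℝ) - 1) * x0 + ((J0:ℝ) - 1) * ((L1:ℝ) * (L2:ℝ))) := by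
      rw [KF, hx0, hx01, hx02, hx5]
    have hDpos : (0:ℝ) < 1 + (J0 : ℝ)⁻¹ * x0 + (M1 : ℝ)⁻¹ * x01 + (M2 : ℝ)⁻¹ * x02 +
        (J0 : ℝ) * ((M1 : ℝ) * (M2 : ℝ))⁻¹ * x5 := by
      have : (0:ℝ) ≤ (J0 : ℝ)⁻¹ * x0 := by positivity
      have : (0:ℝ) ≤ (M1 : ℝ)⁻¹ * x01 := by positivity
      have : (0:ℝ) ≤ (M2 : ℝ)⁻¹ * x02 := by positivity
      have : (0:ℝ) ≤ (J0 : ℝ) * ((M1 : ℝ) * (M2 : ℝ))⁻¹ * x5 := by positivity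
      linarith
    have hDexp : ((J0:ℝ) * (L1:ℝ) * (L2:ℝ)) *
        (1 + (J0 : ℝ)⁻¹ * x0 + (M1 : ℝ)⁻¹ * x01 + (M2 : ℝ)⁻¹ * x02 +
          (J0 : ℝ) * ((M1 : ℝ) * (M2 : ℝ))⁻¹ * x5)
        = (J0:ℝ) * (L1:ℝ) * (L2:ℝ) + (L1:ℝ) * (L2:ℝ) * x0 + (L2:ℝ) * x01 +
          (L1:ℝ) * x02 + x5 := by
      rw [hM1r, hM2r]
      have hJne : (J0:ℝ) ≠ 0 := by positivity
      have hL1ne : (L1:ℝ) ≠ 0 := by positivity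
      have hL2ne : (L2:ℝ) ≠ 0 := by positivity
      field_simp
    have hbr_le : x5 + ((L2:ℝ) - 1) * x01 + ((L1:ℝ) - 1) * x02 +
        ((L1:ℝ) - 1) * ((L2:ℝ) - 1) * x0 + ((J0:ℝ) - 1) * ((L1:ℝ) * (L2:ℝ))
        ≤ ((J0:ℝ) * (L1:ℝ) * (L2:ℝ)) *
          (1 + (J0 : ℝ)⁻¹ * x0 + (M1 : ℝ)⁻¹ * x01 + (M2 : ℝ)⁻¹ * x02 +
            (J0 : ℝ) * ((M1 : ℝ) * (M2 : ℝ))⁻¹ * x5) := by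
      rw [hDexp]
      have c1 : ((L1:ℝ) - 1) * ((L2:ℝ) - 1) * x0 ≤ (L1:ℝ) * (L2:ℝ) * x0 := by
        nlinarith [hx0p.le]
      have c2 : ((L2:ℝ) - 1) * x01 ≤ (L2:ℝ) * x01 := by nlinarith [hx01p.le]
      have c3 : ((L1:ℝ) - 1) * x02 ≤ (L1:ℝ) * x02 := by nlinarith [hx02p.le]
      have c4 : ((J0:ℝ) - 1) * ((L1:ℝ) * (L2:ℝ)) ≤ (J0:ℝ) * (L1:ℝ) * (L2:ℝ) := by
        nlinarith [mul_pos (lt_of_lt_of_le zero_lt_one hL1') (lt_of_lt_of_le zero_lt_one hL2')]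
      linarith
    -- final per-term inequality
    have hN : 0 ≤ qMD qS qU s u0 u1 u2 *
        ind (d0 s (g0 u0 u1 u2) ≤ D0 ∧ d1 s (g1 u0 u1) ≤ D1 ∧ d2 s (g2 u0 u2) ≤ D2) :=
      mul_nonneg (qMD_nonneg qS qU s u0 u1 u2) (ind_nonneg _)
    rw [hKval]
    have hsimp : ((J0 * L1 * L2 : ℕ) : ℝ) * (qS.p s * (qMD qS qU s u0 u1 u2 *
        ind (d0 s (g0 u0 u1 u2) ≤ D0 ∧ d1 s (g1 u0 u1) ≤ D1 ∧ d2 s (g2 u0 u2) ≤ D2) /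
        (qS.p s * (x5 + ((L2:ℝ) - 1) * x01 + ((L1:ℝ) - 1) * x02 +
          ((L1:ℝ) - 1) * ((L2:ℝ) - 1) * x0 + ((J0:ℝ) - 1) * ((L1:ℝ) * (L2:ℝ))))))
        = ((J0:ℝ) * (L1:ℝ) * (L2:ℝ)) * (qMD qS qU s u0 u1 u2 *
          ind (d0 s (g0 u0 u1 u2) ≤ D0 ∧ d1 s (g1 u0 u1) ≤ D1 ∧ d2 s (g2 u0 u2) ≤ D2)) /
          (x5 + ((L2:ℝ) - 1) * x01 + ((L1:ℝ) - 1) * x02 +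
            ((L1:ℝ) - 1) * ((L2:ℝ) - 1) * x0 + ((J0:ℝ) - 1) * ((L1:ℝ) * (L2:ℝ))) := by
      push_cast
      field_simp
    rw [hsimp]
    rw [← div_eq_mul_inv, div_le_div_iff₀ hDpos hbrpos]
    nlinarith [mul_le_mul_of_nonneg_left hbr_le hN]
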